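/- arXiv:1206.5345 — 3 statements merged into one kernel-verified Lean document; each statement's English description precedes it below -/
import Mathlib

section
/- Theorem 1 (LRT achieves bounded regret — bounded expected number of suboptimal selections). Let i ∈ {0,1} be the true demand model and consider a pricing process under model i that follows the LRT policy. Set a_i = min over k ∈ Fin 2 of I(q i k ‖ q (1−i) k). Then a_i > 0, and for every horizon T ≥ 1, E[#{t : 1 ≤ t ≤ T, a_t ≠ i}] ≤ 1 + (M − m)² / (2 a_i²); in particular the expected number of times the LRT policy selects the suboptimal arm is bounded by a constant independent of T. -/
open MeasureTheory ProbabilityTheory Finset Real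

noncomputable section

/-- Probability of outcome `y ∈ {0,1}` under a Bernoulli distribution with success
probability `p`:  `f p y = p^y (1-p)^(1-y)`. -/
def bern (p : ℝ) (y : ℕ) : ℝ := p ^ y * (1 - p) ^ (1 - y)

/-- The Kullback–Leibler divergence between Bernoulli(α) and Bernoulli(β). -/
def klBern (α β : ℝ) : ℝ :=
  α * Real.log (α / β) + (1 - α) * Real.log ((1 - α) / (1 - β))

lemma bern_denom_pos {p : ℝ} (hp0 : 0 ≤ p) (hp1 : p ≤ 1) (x : ℝ) :
    0 < 1 - p + p * Real.exp x := by
  rcases eq_or_lt_of_le hp1 with h1 | h1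
  · have : p = 1 := h1.symm ▸ rfl
    simp [this, Real.exp_pos x]
  · have h2 : 0 ≤ p * Real.exp x := mul_nonneg hp0 (Real.exp_pos x).le
    linarith

lemma hoeffding_log_le (p : ℝ) (hp0 : 0 ≤ p) (hp1 : p ≤ 1) (h : ℝ) :
    Real.log (1 - p + p * Real.exp h) ≤ p * h + h ^ 2 / 8 := by
  set d : ℝ → ℝ := fun x => 1 - p + p * Real.exp x with hd_def
  have hd_pos : ∀ x, 0 < d x := fun x => bern_denom_pos hp0 hp1 x
  set G : ℝ → ℝ := fun x => p + x / 4 - p * Real.exp x / d x with hG_def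
  set F : ℝ → ℝ := fun x => p * x + x ^ 2 / 8 - Real.log (d x) with hF_def
  have hd' : ∀ x, HasDerivAt d (p * Real.exp x) x := fun x => by
    exact ((Real.hasDerivAt_exp x).const_mul p).const_add (1 - p)
  have hF' : ∀ x, HasDerivAt F (G x) x := by
    intro x
    have hlog : HasDerivAt (fun x => Real.log (d x)) (p * Real.exp x / d x) x :=
      (hd' x).log (hd_pos x).ne'
    have h1 : HasDerivAt (fun x : ℝ => p * x + x ^ 2 / 8) (p + x / 4) x := by
      have ha : HasDerivAt (fun x : ℝ => p * x) p x := by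
        simpa using (hasDerivAt_id x).const_mul p
      have hb : HasDerivAt (fun x : ℝ => x ^ 2 / 8) (x / 4) x := by
        have := (hasDerivAt_pow 2 x).div_const 8
        simpa using this.congr_deriv (by ring)
      exact ha.add hb
    exact h1.sub hlog
  have hG' : ∀ x, HasDerivAt G
      (1 / 4 - ((p * Real.exp x) * d x - (p * Real.exp x) * (p * Real.exp x)) / (d x) ^ 2) x := by
    intro x
    have hq : HasDerivAt (fun x => p * Real.exp x / d x)
        (((p * Real.exp x) * d x - (p * Real.exp x) * (p * Real.exp x)) / (d x) ^ 2) x :=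
      ((Real.hasDerivAt_exp x).const_mul p).div (hd' x) (hd_pos x).ne'
    have h1 : HasDerivAt (fun x : ℝ => p + x / 4) (1 / 4) x := by
      simpa using ((hasDerivAt_id x).div_const 4).const_add p
    exact h1.sub hq
  have hGd : Differentiable ℝ G := fun x => (hG' x).differentiableAt
  have hFd : Differentiable ℝ F := fun x => (hF' x).differentiableAt
  have hmono : Monotone G := by
    apply monotone_of_deriv_nonneg hGd
    intro x
    rw [(hG' x).deriv]
    have hdp := hd_pos x
    have hd2 : 0 < (d x) ^ 2 := pow_pos hdp 2
    rw [sub_nonneg, div_le_iff₀ hd2]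
    nlinarith [sq_nonneg (d x / 2 - p * Real.exp x)]
  have hG0 : G 0 = 0 := by
    have : d 0 = 1 := by simp [hd_def]
    simp [hG_def, this]
  have hF0 : F 0 = 0 := by
    have : d 0 = 1 := by simp [hd_def]
    simp [hF_def, this]
  have key : F 0 ≤ F h := by
    rcases le_total 0 h with hh | hh
    · have h1 : MonotoneOn F (Set.Ici 0) := by
        apply monotoneOn_of_deriv_nonneg (convex_Ici 0) hFd.continuous.continuousOn
          (fun x _ => (hFd x).differentiableWithinAt)
        intro x hx
        rw [(hF' x).deriv]
        have : (0:ℝ) ≤ x := (interior_subset hx)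
        calc (0:ℝ) = G 0 := hG0.symm
          _ ≤ G x := hmono this
      exact h1 Set.self_mem_Ici hh hh
    · have h2 : AntitoneOn F (Set.Iic 0) := by
        apply antitoneOn_of_deriv_nonpos (convex_Iic 0) hFd.continuous.continuousOn
          (fun x _ => (hFd x).differentiableWithinAt)
        intro x hx
        rw [(hF' x).deriv]
        have hx0 : x ∈ Set.Iic (0:ℝ) := interior_subset hx
        calc G x ≤ G 0 := hmono hx0
          _ = 0 := hG0
      exact h2 hh Set.self_mem_Iic hh
  rw [hF0] at key
  simp only [hF_def] at key
  linarith

lemma two_point_mgf (p u v t : ℝ) (hp0 : 0 ≤ p) (hp1 : p ≤ 1) :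
    p * Real.exp (t * u) + (1 - p) * Real.exp (t * v)
      ≤ Real.exp (t * (p * u + (1 - p) * v) + t ^ 2 * (u - v) ^ 2 / 8) := by
  have key := hoeffding_log_le p hp0 hp1 (t * (u - v))
  have hdpos := bern_denom_pos hp0 hp1 (t * (u - v))
  have h1 : p * Real.exp (t * u) + (1 - p) * Real.exp (t * v)
      = Real.exp (t * v) * (1 - p + p * Real.exp (t * (u - v))) := by
    rw [show t * u = t * v + t * (u - v) by ring, Real.exp_add]; ring
  have h2 : 1 - p + p * Real.exp (t * (u - v))
      ≤ Real.exp (p * (t * (u - v)) + (t * (u - v)) ^ 2 / 8) := by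
    rw [← Real.exp_log hdpos]
    exact Real.exp_le_exp.mpr key
  calc p * Real.exp (t * u) + (1 - p) * Real.exp (t * v)
      = Real.exp (t * v) * (1 - p + p * Real.exp (t * (u - v))) := h1
    _ ≤ Real.exp (t * v) * Real.exp (p * (t * (u - v)) + (t * (u - v)) ^ 2 / 8) :=
        mul_le_mul_of_nonneg_left h2 (Real.exp_pos _).le
    _ = Real.exp (t * v + (p * (t * (u - v)) + (t * (u - v)) ^ 2 / 8)) := (Real.exp_add _ _).symm
    _ = Real.exp (t * (p * u + (1 - p) * v) + t ^ 2 * (u - v) ^ 2 / 8) := by ring_nf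

lemma klBern_pos {α β : ℝ} (hα : α ∈ Set.Ioo (0:ℝ) 1) (hβ : β ∈ Set.Ioo (0:ℝ) 1)
    (hne : α ≠ β) : 0 < klBern α β := by
  obtain ⟨ha0, ha1⟩ := hα; obtain ⟨hb0, hb1⟩ := hβ
  have h1 : Real.log (β / α) < β / α - 1 := by
    apply Real.log_lt_sub_one_of_pos (div_pos hb0 ha0)
    intro h
    exact hne (by field_simp at h; linarith)
  have h2 : Real.log ((1 - β) / (1 - α)) < (1 - β) / (1 - α) - 1 := by
    apply Real.log_lt_sub_one_of_pos (div_pos (by linarith) (by linarith))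
    intro h
    apply hne
    rw [div_eq_one_iff_eq (by linarith : (1:ℝ) - α ≠ 0)] at h
    linarith
  have m1 : α * Real.log β - α * Real.log α < β - α := by
    rw [Real.log_div hb0.ne' ha0.ne'] at h1
    have := mul_lt_mul_of_pos_left h1 ha0
    rw [mul_sub] at this
    have e : α * (β / α - 1) = β - α := by field_simp
    linarith [e ▸ this]
  have m2 : (1 - α) * Real.log (1 - β) - (1 - α) * Real.log (1 - α) < α - β := by
    rw [Real.log_div (by linarith : (1:ℝ) - β ≠ 0) (by linarith : (1:ℝ) - α ≠ 0)] at h2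
    have h1a : (0:ℝ) < 1 - α := by linarith
    have := mul_lt_mul_of_pos_left h2 h1a
    rw [mul_sub] at this
    have e : (1 - α) * ((1 - β) / (1 - α) - 1) = α - β := by field_simp; ring
    linarith [e ▸ this]
  have e1 : Real.log (α / β) = Real.log α - Real.log β := Real.log_div ha0.ne' hb0.ne'
  have e2 : Real.log ((1 - α) / (1 - β)) = Real.log (1 - α) - Real.log (1 - β) :=
    Real.log_div (by linarith) (by linarith)
  rw [klBern, e1, e2, mul_sub, mul_sub]
  linarith

variable {Ω : Type*} {mΩ : MeasurableSpace Ω}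

/-- The (unnormalized) log-likelihood statistic
`L t = ∑_{j=1}^t log (f₁^{a_j}(y_j) / f₀^{a_j}(y_j))`, with `L 0 = 0`. -/
def LLR (q : Fin 2 → Fin 2 → ℝ) (a : ℕ → Ω → Fin 2) (y : ℕ → Ω → ℕ) (t : ℕ) (ω : Ω) : ℝ :=
  ∑ j ∈ Finset.Icc 1 t,
    Real.log (bern (q 1 (a j ω)) (y j ω) / bern (q 0 (a j ω)) (y j ω))

/-- A pricing process under true demand model `i`: actions `a t` are `ℱ (t-1)`-measurable,
outcomes `y t ∈ {0,1}` are `ℱ t`-measurable, and the conditional probability of a successful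
sale at time `t` given the past is `q i (a t)` almost surely. -/
structure IsPricingProcess (μ : Measure Ω) (ℱ : Filtration ℕ mΩ)
    (q : Fin 2 → Fin 2 → ℝ) (i : Fin 2) (a : ℕ → Ω → Fin 2) (y : ℕ → Ω → ℕ) : Prop where
  meas_a : ∀ t, 1 ≤ t → Measurable[ℱ (t - 1)] (a t)
  meas_y : ∀ t, 1 ≤ t → Measurable[ℱ t] (y t)
  y_range : ∀ t, 1 ≤ t → ∀ ω, y t ω = 0 ∨ y t ω = 1
  sale_prob : ∀ t, 1 ≤ t →
    μ[Set.indicator {ω | y t ω = 1} (fun _ => (1 : ℝ)) | ℱ (t - 1)]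
      =ᵐ[μ] fun ω => q i (a t ω)

/-- The LRT policy: for `t ≥ 1`, `a (t+1) = 1` if `L t ≥ 0` and `a (t+1) = 0` if `L t < 0`. -/
def IsLRT (q : Fin 2 → Fin 2 → ℝ) (a : ℕ → Ω → Fin 2) (y : ℕ → Ω → ℕ) : Prop :=
  ∀ t, 1 ≤ t → ∀ ω, a (t + 1) ω = if 0 ≤ LLR q a y t ω then 1 else 0

set_option maxHeartbeats 4000000 in
/-- **Theorem 1 (LRT achieves bounded regret — bounded expected number of suboptimal
selections).** If the true demand model is `i`, then `aᵢ = min_k I(q i k ‖ q (1-i) k) > 0` and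
the expected number of times `t ∈ {1, …, T}` at which the LRT policy selects the suboptimal
arm is at most `1 + (M - m)² / (2 aᵢ²)`, uniformly in the horizon `T`. -/
theorem lrt_bounded_number_of_suboptimal_selections
    (μ : Measure Ω) [IsProbabilityMeasure μ] (ℱ : Filtration ℕ mΩ)
    (q : Fin 2 → Fin 2 → ℝ)
    (hq : ∀ i k, q i k ∈ Set.Ioo (0 : ℝ) 1)
    (hni : ∀ k, q 0 k ≠ q 1 k)
    (i : Fin 2) (a : ℕ → Ω → Fin 2) (y : ℕ → Ω → ℕ)
    (hproc : IsPricingProcess μ ℱ q i a y)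
    (hpol : IsLRT q a y)
    (ai m M : ℝ)
    (hai : ai = Finset.univ.inf' ⟨0, Finset.mem_univ 0⟩
      (fun k : Fin 2 => klBern (q i k) (q (1 - i) k)))
    (hm : m = Finset.univ.inf' ⟨(0, 0), Finset.mem_univ _⟩
      (fun p : Fin 2 × Fin 2 =>
        Real.log (bern (q 1 p.1) (p.2 : ℕ) / bern (q 0 p.1) (p.2 : ℕ))))
    (hM : M = Finset.univ.sup' ⟨(0, 0), Finset.mem_univ _⟩
      (fun p : Fin 2 × Fin 2 =>
        Real.log (bern (q 1 p.1) (p.2 : ℕ) / bern (q 0 p.1) (p.2 : ℕ)))) :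
    0 < ai ∧
      ∀ T : ℕ, 1 ≤ T →
        (∫ ω, (((Finset.Icc 1 T).filter (fun t => a t ω ≠ i)).card : ℝ) ∂μ)
          ≤ 1 + (M - m) ^ 2 / (2 * ai ^ 2) := by
  classical
  have hq0 : ∀ j k, 0 < q j k := fun j k => (hq j k).1
  have hq1 : ∀ j k, q j k < 1 := fun j k => (hq j k).2
  have hi01 : i = 0 ∨ i = 1 := by
    fin_cases i
    · exact Or.inl rfl
    · exact Or.inr rfl
  set g : Fin 2 → ℕ → ℝ := fun k z => Real.log (bern (q 1 k) z / bern (q 0 k) z) with hg_def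
  have hg1 : ∀ k, g k 1 = Real.log (q 1 k / q 0 k) := by
    intro k; simp [hg_def, bern]
  have hg0 : ∀ k, g k 0 = Real.log ((1 - q 1 k) / (1 - q 0 k)) := by
    intro k; simp [hg_def, bern]
  have hmle : ∀ (k : Fin 2) (z : Fin 2), m ≤ g k (z : ℕ) := by
    intro k z; rw [hm]
    exact Finset.inf'_le _ (Finset.mem_univ (k, z))
  have hMge : ∀ (k : Fin 2) (z : Fin 2), g k (z : ℕ) ≤ M := by
    intro k z; rw [hM]
    exact Finset.le_sup' (fun p : Fin 2 × Fin 2 =>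
      Real.log (bern (q 1 p.1) (p.2 : ℕ) / bern (q 0 p.1) (p.2 : ℕ))) (Finset.mem_univ (k, z))
  have hm0 : ∀ k, m ≤ g k 0 := fun k => by simpa using hmle k 0
  have hm1 : ∀ k, m ≤ g k 1 := fun k => by simpa using hmle k 1
  have hM0 : ∀ k, g k 0 ≤ M := fun k => by simpa using hMge k 0
  have hM1 : ∀ k, g k 1 ≤ M := fun k => by simpa using hMge k 1
  have hgne : g 0 1 ≠ g 0 0 := by
    intro h
    rw [hg1, hg0] at h
    have h00 := hq0 0 0; have h10 := hq0 1 0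
    have h01 := hq1 0 0; have h11 := hq1 1 0
    have heq : q 1 0 / q 0 0 = (1 - q 1 0) / (1 - q 0 0) :=
      Real.log_injOn_pos (Set.mem_Ioi.mpr (div_pos h10 h00))
        (Set.mem_Ioi.mpr (div_pos (by linarith) (by linarith))) h
    rw [div_eq_div_iff (by linarith) (by linarith)] at heq
    exact hni 0 (by nlinarith)
  have hmM : m < M := by
    by_contra hcon
    push_neg at hcon
    exact hgne (le_antisymm (by linarith [hm0 0, hM1 0]) (by linarith [hm1 0, hM0 0]))
  have hqine : ∀ k, q i k ≠ q (1 - i) k := by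
    intro k
    rcases hi01 with h | h <;> rw [h]
    · rw [show (1 - 0 : Fin 2) = 1 by decide]; exact hni k
    · rw [show (1 - 1 : Fin 2) = 0 by decide]; exact (hni k).symm
  have hai_pos : 0 < ai := by
    rw [hai]; apply (Finset.lt_inf'_iff _).2
    intro k _
    exact klBern_pos (hq i k) (hq (1 - i) k) (hqine k)
  obtain ⟨ε, hε_def⟩ : ∃ e : ℝ, e = if i = 1 then 1 else -1 := ⟨_, rfl⟩
  have hε : ε = 1 ∨ ε = -1 := by
    rw [hε_def]; split <;> simp
  have hmean : ∀ k, ai ≤ q i k * (ε * g k 1) + (1 - q i k) * (ε * g k 0) := by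
    intro k
    have hkl : ai ≤ klBern (q i k) (q (1 - i) k) := by
      rw [hai]; exact Finset.inf'_le _ (Finset.mem_univ k)
    refine hkl.trans (le_of_eq ?_)
    have e1 : Real.log (q 1 k / q 0 k) = Real.log (q 1 k) - Real.log (q 0 k) :=
      Real.log_div (hq0 1 k).ne' (hq0 0 k).ne'
    have e0 : Real.log ((1 - q 1 k) / (1 - q 0 k))
        = Real.log (1 - q 1 k) - Real.log (1 - q 0 k) :=
      Real.log_div (by linarith [hq1 1 k]) (by linarith [hq1 0 k])
    have e1' : Real.log (q 0 k / q 1 k) = Real.log (q 0 k) - Real.log (q 1 k) :=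
      Real.log_div (hq0 0 k).ne' (hq0 1 k).ne'
    have e0' : Real.log ((1 - q 0 k) / (1 - q 1 k))
        = Real.log (1 - q 0 k) - Real.log (1 - q 1 k) :=
      Real.log_div (by linarith [hq1 0 k]) (by linarith [hq1 1 k])
    rcases hi01 with h | h
    · have hεv : ε = -1 := by rw [hε_def, h, if_neg (by decide)]
      rw [h, show (1 - 0 : Fin 2) = 1 by decide, hεv, hg1, hg0]
      simp only [klBern]
      rw [e1', e0', e1, e0]
      ring
    · have hεv : ε = 1 := by rw [hε_def, h, if_pos rfl]
      rw [h, show (1 - 1 : Fin 2) = 0 by decide, hεv, hg1, hg0]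
      simp only [klBern]
      rw [e1, e0]
      ring
  have hevent : ∀ t, 1 ≤ t → ∀ ω, a (t + 1) ω ≠ i → ε * LLR q a y t ω ≤ 0 := by
    intro t ht ω hne
    have hpa := hpol t ht ω
    rcases hi01 with h | h <;> rw [h] at hne
    · have hεv : ε = -1 := by rw [hε_def, h, if_neg (by decide)]
      by_cases hL : 0 ≤ LLR q a y t ω
      · rw [hεv]; linarith
      · rw [hpa, if_neg hL] at hne; exact absurd rfl hne
    · have hεv : ε = 1 := by rw [hε_def, h, if_pos rfl]
      by_cases hL : 0 ≤ LLR q a y t ω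
      · rw [hpa, if_pos hL] at hne; exact absurd rfl hne
      · rw [hεv]; linarith
  refine ⟨hai_pos, ?_⟩
  obtain ⟨R, hR_def⟩ : ∃ r : ℝ, r = M - m := ⟨_, rfl⟩
  have hRpos : 0 < R := by rw [hR_def]; linarith
  have hRne : R ≠ 0 := ne_of_gt hRpos
  obtain ⟨lam, hlam_def⟩ : ∃ l : ℝ, l = 4 * ai / R ^ 2 := ⟨_, rfl⟩
  have hlam_pos : 0 < lam := by rw [hlam_def]; positivity
  obtain ⟨c, hc_def⟩ : ∃ x : ℝ, x = 2 * ai ^ 2 / R ^ 2 := ⟨_, rfl⟩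
  have hcpos : 0 < c := by rw [hc_def]; positivity
  obtain ⟨ρ, hρ_def⟩ : ∃ x : ℝ, x = Real.exp (-c) := ⟨_, rfl⟩
  have hρpos : 0 < ρ := by rw [hρ_def]; exact Real.exp_pos _
  have hρlt : ρ < 1 := by
    rw [hρ_def, show (1 : ℝ) = Real.exp 0 by simp]
    exact Real.exp_lt_exp.mpr (by linarith)
  have hstep : ∀ k : Fin 2,
      q i k * Real.exp ((-lam) * (ε * g k 1))
        + (1 - q i k) * Real.exp ((-lam) * (ε * g k 0)) ≤ ρ := by
    intro k
    have h2p := two_point_mgf (q i k) (ε * g k 1) (ε * g k 0) (-lam) (hq0 i k).le (hq1 i k).le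
    refine h2p.trans ?_
    rw [hρ_def]
    apply Real.exp_le_exp.mpr
    have hμ := hmean k
    have hd2 : (ε * g k 1 - ε * g k 0) ^ 2 ≤ R ^ 2 := by
      have he : (ε * g k 1 - ε * g k 0) ^ 2 = (g k 1 - g k 0) ^ 2 := by
        rcases hε with h | h <;> rw [h] <;> ring
      rw [he]
      apply sq_le_sq'
      · rw [hR_def]; linarith [hm1 k, hM0 k]
      · rw [hR_def]; linarith [hM1 k, hm0 k]
    have heq : -lam * ai + lam ^ 2 * R ^ 2 / 8 = -c := by
      rw [hlam_def, hc_def]; field_simp; ring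
    have t1 : (-lam) * (q i k * (ε * g k 1) + (1 - q i k) * (ε * g k 0)) ≤ -lam * ai := by
      nlinarith
    have t2 : (-lam) ^ 2 * (ε * g k 1 - ε * g k 0) ^ 2 / 8 ≤ lam ^ 2 * R ^ 2 / 8 := by
      nlinarith [mul_le_mul_of_nonneg_left hd2 (sq_nonneg lam)]
    nlinarith [t1, t2, heq]
  set X : ℕ → Ω → ℝ := fun t ω => g (a t ω) (y t ω) with hX_def
  have hLLR_eq : ∀ t, LLR q a y t = fun ω => ∑ j ∈ Finset.Icc 1 t, X j ω := fun t => rfl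
  set W : ℕ → Ω → ℝ := fun t ω => Real.exp ((-lam) * (ε * LLR q a y t ω)) with hW_def
  set V : ℕ → Ω → ℝ := fun t ω => Real.exp ((-lam) * (ε * X t ω)) with hV_def
  have ha_meas' : ∀ t, 1 ≤ t → Measurable (a t) :=
    fun t ht => (hproc.meas_a t ht).mono (ℱ.le _) le_rfl
  have hy_meas' : ∀ t, 1 ≤ t → Measurable (y t) :=
    fun t ht => (hproc.meas_y t ht).mono (ℱ.le _) le_rfl
  have hX_measF : ∀ t, 1 ≤ t → Measurable[ℱ t] (X t) := by
    intro t ht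
    have ha : Measurable[ℱ t] (a t) :=
      (hproc.meas_a t ht).mono (ℱ.mono (Nat.sub_le t 1)) le_rfl
    have hy := hproc.meas_y t ht
    have hpair : Measurable[ℱ t] (fun ω => (a t ω, y t ω)) := ha.prodMk hy
    exact (measurable_of_countable (fun p : Fin 2 × ℕ => g p.1 p.2)).comp hpair
  have hLLR_measF : ∀ t, Measurable[ℱ t] (LLR q a y t) := by
    intro t
    rw [hLLR_eq]
    apply Finset.measurable_sum
    intro j hj
    rw [Finset.mem_Icc] at hj
    exact (hX_measF j hj.1).mono (ℱ.mono hj.2) le_rfl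
  have hW_measF : ∀ t, StronglyMeasurable[ℱ t] (W t) :=
    fun t => (Real.measurable_exp.comp
      (((hLLR_measF t).const_mul ε).const_mul (-lam))).stronglyMeasurable
  have hV_meas : ∀ t, 1 ≤ t → Measurable (V t) :=
    fun t ht => Real.measurable_exp.comp
      ((((hX_measF t ht).mono (ℱ.le t) le_rfl).const_mul ε).const_mul (-lam))
  obtain ⟨C, hC_def⟩ : ∃ x : ℝ, x = max |m| |M| := ⟨_, rfl⟩
  have hgC : ∀ (k : Fin 2) (z : ℕ), z = 0 ∨ z = 1 → |g k z| ≤ C := by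
    intro k z hz
    have h1 : m ≤ g k z ∧ g k z ≤ M := by
      rcases hz with h | h <;> rw [h]
      · exact ⟨hm0 k, hM0 k⟩
      · exact ⟨hm1 k, hM1 k⟩
    rw [abs_le]
    constructor
    · have h2 := neg_abs_le m; have h3 := le_max_left |m| |M|
      rw [hC_def]; linarith [h1.1]
    · have h2 := le_abs_self M; have h3 := le_max_right |m| |M|
      rw [hC_def]; linarith [h1.2]
  have hXC : ∀ t, 1 ≤ t → ∀ ω, |X t ω| ≤ C := by
    intro t ht ω
    exact hgC (a t ω) (y t ω) (hproc.y_range t ht ω)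
  have hLb : ∀ t ω, |LLR q a y t ω| ≤ (t : ℝ) * C := by
    intro t ω
    rw [hLLR_eq]
    calc |∑ j ∈ Finset.Icc 1 t, X j ω| ≤ ∑ j ∈ Finset.Icc 1 t, |X j ω| :=
          Finset.abs_sum_le_sum_abs _ _
      _ ≤ ∑ _j ∈ Finset.Icc 1 t, C := by
          apply Finset.sum_le_sum
          intro j hj
          rw [Finset.mem_Icc] at hj
          exact hXC j hj.1 ω
      _ = (t : ℝ) * C := by
          rw [Finset.sum_const, Nat.card_Icc]
          simp [nsmul_eq_mul]
  have hWb : ∀ t ω, W t ω ≤ Real.exp (lam * ((t : ℝ) * C)) := by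
    intro t ω
    rw [hW_def]
    apply Real.exp_le_exp.mpr
    have h1 : |ε * LLR q a y t ω| ≤ (t : ℝ) * C := by
      rcases hε with h | h <;> rw [h] <;> simpa using hLb t ω
    have h2 : -((t : ℝ) * C) ≤ ε * LLR q a y t ω := (abs_le.mp h1).1
    nlinarith [mul_le_mul_of_nonneg_left h2 hlam_pos.le]
  have hWpos : ∀ t ω, 0 < W t ω := fun t ω => Real.exp_pos _
  have hWint : ∀ t, Integrable (W t) μ := by
    intro t
    apply Integrable.mono' (integrable_const (Real.exp (lam * ((t : ℝ) * C))))
      ((hW_measF t).mono (ℱ.le t)).aestronglyMeasurable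
    filter_upwards with ω
    rw [Real.norm_eq_abs, abs_of_pos (hWpos t ω)]
    exact hWb t ω
  have hVb : ∀ t, 1 ≤ t → ∀ ω, V t ω ≤ Real.exp (lam * C) := by
    intro t ht ω
    rw [hV_def]
    apply Real.exp_le_exp.mpr
    have h1 : |ε * X t ω| ≤ C := by
      rcases hε with h | h <;> rw [h] <;> simpa using hXC t ht ω
    have h2 : -C ≤ ε * X t ω := (abs_le.mp h1).1
    nlinarith [mul_le_mul_of_nonneg_left h2 hlam_pos.le]
  have hVint : ∀ t, 1 ≤ t → Integrable (V t) μ := by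
    intro t ht
    apply Integrable.mono' (integrable_const (Real.exp (lam * C)))
      (hV_meas t ht).aestronglyMeasurable
    filter_upwards with ω
    rw [Real.norm_eq_abs, abs_of_pos (Real.exp_pos _)]
    exact hVb t ht ω
  have hLLR_succ : ∀ t ω, LLR q a y (t + 1) ω = LLR q a y t ω + X (t + 1) ω := by
    intro t ω
    simp only [hLLR_eq]
    exact Finset.sum_Icc_succ_top (Nat.succ_le_succ (Nat.zero_le t)) _
  have hW_succ : ∀ t, W (t + 1) = W t * V (t + 1) := by
    intro t
    funext ω
    simp only [Pi.mul_apply, hW_def, hV_def, hLLR_succ t ω]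
    rw [← Real.exp_add]
    ring_nf
  -- one-step conditional bound
  have hcond : ∀ t, 1 ≤ t → (μ[V t | ℱ (t - 1)]) ≤ᵐ[μ] fun _ => ρ := by
    intro t ht
    have hm' : ℱ (t - 1) ≤ mΩ := ℱ.le _
    have hmeas_a : Measurable[ℱ (t - 1)] (a t) := hproc.meas_a t ht
    have hcompA : ∀ F : Fin 2 → ℝ, Measurable[ℱ (t - 1)] (fun ω => F (a t ω)) :=
      fun F => (measurable_of_countable F).comp hmeas_a
    set f0 : Ω → ℝ := fun ω => Real.exp ((-lam) * (ε * g (a t ω) 0)) with hf0_def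
    set fd : Ω → ℝ := fun ω =>
      Real.exp ((-lam) * (ε * g (a t ω) 1)) - Real.exp ((-lam) * (ε * g (a t ω) 0)) with hfd_def
    set I1 : Ω → ℝ := Set.indicator {ω | y t ω = 1} (fun _ => (1 : ℝ)) with hI1_def
    have hexpb : ∀ (ω : Ω) (z : ℕ), z = 0 ∨ z = 1 →
        Real.exp ((-lam) * (ε * g (a t ω) z)) ≤ Real.exp (lam * C) := by
      intro ω z hz
      apply Real.exp_le_exp.mpr
      have h1 : |ε * g (a t ω) z| ≤ C := by
        rcases hε with h | h <;> rw [h] <;> simpa using hgC (a t ω) z hz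
      have h2 : -C ≤ ε * g (a t ω) z := (abs_le.mp h1).1
      nlinarith [mul_le_mul_of_nonneg_left h2 hlam_pos.le]
    have hf0_meas : StronglyMeasurable[ℱ (t - 1)] f0 :=
      (hcompA fun k => Real.exp ((-lam) * (ε * g k 0))).stronglyMeasurable
    have hfd_meas : StronglyMeasurable[ℱ (t - 1)] fd :=
      (hcompA fun k =>
        Real.exp ((-lam) * (ε * g k 1)) - Real.exp ((-lam) * (ε * g k 0))).stronglyMeasurable
    have hfdb : ∀ ω, |fd ω| ≤ 2 * Real.exp (lam * C) := by
      intro ω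
      have e1 := hexpb ω 1 (Or.inr rfl)
      have e0 := hexpb ω 0 (Or.inl rfl)
      have p1 := Real.exp_pos ((-lam) * (ε * g (a t ω) 1))
      have p0 := Real.exp_pos ((-lam) * (ε * g (a t ω) 0))
      rw [hfd_def, abs_le]
      constructor <;> simp only <;> linarith
    have hf0_int : Integrable f0 μ := by
      apply Integrable.mono' (integrable_const (Real.exp (lam * C)))
        (hf0_meas.mono hm').aestronglyMeasurable
      filter_upwards with ω
      rw [Real.norm_eq_abs, abs_of_pos (Real.exp_pos _)]
      exact hexpb ω 0 (Or.inl rfl)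
    have hyset : MeasurableSet {ω | y t ω = 1} := by
      have hss : {ω | y t ω = 1} = y t ⁻¹' {1} := by ext ω; simp
      rw [hss]
      exact (hy_meas' t ht) (measurableSet_singleton 1)
    have hI1_int : Integrable I1 μ := by
      rw [hI1_def]
      exact (integrable_const (1 : ℝ)).indicator hyset
    have hI1_meas : Measurable I1 := by
      rw [hI1_def]
      exact measurable_const.indicator hyset
    have hI1b : ∀ ω, |I1 ω| ≤ 1 := by
      intro ω
      rw [hI1_def, Set.indicator_apply]
      split <;> simp
    have hfdI1_int : Integrable (fd * I1) μ := by
      apply Integrable.mono' (integrable_const (2 * Real.exp (lam * C)))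
        (((hfd_meas.mono hm').measurable.mul hI1_meas).aestronglyMeasurable)
      filter_upwards with ω
      rw [Real.norm_eq_abs, Pi.mul_apply, abs_mul]
      calc |fd ω| * |I1 ω| ≤ 2 * Real.exp (lam * C) * 1 :=
            mul_le_mul (hfdb ω) (hI1b ω) (abs_nonneg _) (by positivity)
        _ = 2 * Real.exp (lam * C) := mul_one _
    have hdecomp : V t = f0 + fd * I1 := by
      funext ω
      rcases hproc.y_range t ht ω with h0 | h1
      · have hmem : ω ∉ {ω | y t ω = 1} := by simp [h0]
        simp only [Pi.add_apply, Pi.mul_apply, hV_def, hf0_def, hfd_def, hI1_def,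
          Set.indicator_of_notMem hmem, hX_def, h0, mul_zero, add_zero]
      · have hmem : ω ∈ {ω | y t ω = 1} := by simp [h1]
        simp only [Pi.add_apply, Pi.mul_apply, hV_def, hf0_def, hfd_def, hI1_def,
          Set.indicator_of_mem hmem, hX_def, h1, mul_one]
        ring
    have hsale := hproc.sale_prob t ht
    rw [← hI1_def] at hsale
    have step1 : μ[V t | ℱ (t - 1)] =ᵐ[μ] fun ω => f0 ω + fd ω * q i (a t ω) := by
      have hVeq : μ[V t | ℱ (t - 1)] = μ[f0 + fd * I1 | ℱ (t - 1)] := by rw [hdecomp]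
      rw [hVeq]
      calc μ[f0 + fd * I1 | ℱ (t - 1)]
          =ᵐ[μ] μ[f0 | ℱ (t - 1)] + μ[fd * I1 | ℱ (t - 1)] := condExp_add hf0_int hfdI1_int _
        _ =ᵐ[μ] f0 + fd * μ[I1 | ℱ (t - 1)] := by
            rw [condExp_of_stronglyMeasurable hm' hf0_meas hf0_int]
            exact Filter.EventuallyEq.add (Filter.EventuallyEq.refl _ _)
              (condExp_mul_of_stronglyMeasurable_left hfd_meas hfdI1_int hI1_int)
        _ =ᵐ[μ] fun ω => f0 ω + fd ω * q i (a t ω) := by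
            filter_upwards [hsale] with ω hω
            simp only [Pi.add_apply, Pi.mul_apply, hω]
    filter_upwards [step1] with ω hω
    rw [hω]
    have hb := hstep (a t ω)
    have hrw : f0 ω + fd ω * q i (a t ω)
        = q i (a t ω) * Real.exp ((-lam) * (ε * g (a t ω) 1))
          + (1 - q i (a t ω)) * Real.exp ((-lam) * (ε * g (a t ω) 0)) := by
      simp only [hf0_def, hfd_def]
      ring
    rw [hrw]
    exact hb
  -- supermartingale bound by induction
  have hWbound : ∀ t, ∫ ω, W t ω ∂μ ≤ ρ ^ t := by
    intro t
    induction t with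
    | zero =>
      have hW0 : W 0 = fun _ => 1 := by
        funext ω
        have h0 : LLR q a y 0 ω = 0 := by
          simp only [hLLR_eq]
          rw [Finset.Icc_eq_empty (by omega)]
          exact Finset.sum_empty
        simp only [hW_def, h0, mul_zero, Real.exp_zero]
      rw [hW0]
      simp
    | succ t ih =>
      have h4 := hcond (t + 1) (Nat.succ_le_succ (Nat.zero_le t))
      simp only [Nat.add_sub_cancel] at h4
      have hprod_int : Integrable (W t * V (t + 1)) μ := by
        rw [← hW_succ t]; exact hWint (t + 1)
      have h3 : μ[W t * V (t + 1)|ℱ t] =ᵐ[μ] W t * μ[V (t + 1)|ℱ t] :=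
        condExp_mul_of_stronglyMeasurable_left (hW_measF t) hprod_int
          (hVint (t + 1) (Nat.succ_le_succ (Nat.zero_le t)))
      have hcint : Integrable (W t * μ[V (t + 1)|ℱ t]) μ := integrable_condExp.congr h3
      calc ∫ ω, W (t + 1) ω ∂μ = ∫ ω, (W t * V (t + 1)) ω ∂μ := by rw [hW_succ t]
        _ = ∫ ω, (μ[W t * V (t + 1)|ℱ t]) ω ∂μ := (integral_condExp (ℱ.le t)).symm
        _ = ∫ ω, (W t * μ[V (t + 1)|ℱ t]) ω ∂μ := integral_congr_ae h3
        _ ≤ ∫ ω, W t ω * ρ ∂μ := by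
            apply integral_mono_ae hcint ((hWint t).mul_const ρ)
            filter_upwards [h4] with ω hω
            exact mul_le_mul_of_nonneg_left hω (hWpos t ω).le
        _ = ρ * ∫ ω, W t ω ∂μ := by rw [integral_mul_const]; ring
        _ ≤ ρ * ρ ^ t := mul_le_mul_of_nonneg_left ih hρpos.le
        _ = ρ ^ (t + 1) := by ring
  -- indicators of suboptimal selection
  set N : ℕ → Ω → ℝ := fun t ω => if a t ω ≠ i then (1 : ℝ) else 0 with hN_def
  have hNmeas : ∀ t, 1 ≤ t → Measurable (N t) := by
    intro t ht
    have hs : MeasurableSet {ω | a t ω ≠ i} := by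
      have hss : {ω | a t ω ≠ i} = a t ⁻¹' {i}ᶜ := by ext ω; simp
      rw [hss]
      exact (ha_meas' t ht) (measurableSet_singleton i).compl
    simp only [hN_def]
    exact Measurable.ite hs measurable_const measurable_const
  have hNint : ∀ t, 1 ≤ t → Integrable (N t) μ := by
    intro t ht
    apply Integrable.mono' (integrable_const (1 : ℝ)) (hNmeas t ht).aestronglyMeasurable
    filter_upwards with ω
    simp only [hN_def, Real.norm_eq_abs]
    split <;> simp
  have hN1 : ∫ ω, N 1 ω ∂μ ≤ 1 := by
    calc ∫ ω, N 1 ω ∂μ ≤ ∫ _ω, (1 : ℝ) ∂μ := by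
          apply integral_mono (hNint 1 le_rfl) (integrable_const 1)
          intro ω
          simp only [hN_def]
          split <;> norm_num
      _ = 1 := by simp
  have hNsucc : ∀ t, 1 ≤ t → ∫ ω, N (t + 1) ω ∂μ ≤ ρ ^ t := by
    intro t ht
    have hpt : ∀ ω, N (t + 1) ω ≤ W t ω := by
      intro ω
      by_cases hcc : a (t + 1) ω ≠ i
      · have hL := hevent t ht ω hcc
        have hnn : 0 ≤ (-lam) * (ε * LLR q a y t ω) := by
          nlinarith [mul_nonneg hlam_pos.le (neg_nonneg.mpr hL)]
        simp only [hN_def, if_pos hcc, hW_def]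
        calc (1 : ℝ) = Real.exp 0 := Real.exp_zero.symm
          _ ≤ _ := Real.exp_le_exp.mpr hnn
      · simp only [hN_def, if_neg hcc]
        exact (hWpos t ω).le
    calc ∫ ω, N (t + 1) ω ∂μ ≤ ∫ ω, W t ω ∂μ :=
          integral_mono (hNint (t + 1) (by omega)) (hWint t) hpt
      _ ≤ ρ ^ t := hWbound t
  -- geometric series bounds
  have h1ρ : 0 < 1 - ρ := by linarith
  have hgeom : ∀ n : ℕ, ∑ s ∈ Finset.range n, ρ ^ s ≤ 1 / (1 - ρ) := by
    intro n
    calc ∑ s ∈ Finset.range n, ρ ^ s = (ρ ^ n - 1) / (ρ - 1) :=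
          geom_sum_eq (by linarith) n
      _ = (1 - ρ ^ n) / (1 - ρ) := by
          rw [div_eq_div_iff (sub_ne_zero.mpr (by linarith : ρ ≠ (1:ℝ)))
            (sub_ne_zero.mpr (by linarith : (1:ℝ) ≠ ρ))]
          ring
      _ ≤ 1 / (1 - ρ) := by
          gcongr
          nlinarith [pow_nonneg hρpos.le n]
  have htail : ρ / (1 - ρ) ≤ (M - m) ^ 2 / (2 * ai ^ 2) := by
    obtain ⟨E, hE_def⟩ : ∃ x : ℝ, x = Real.exp c := ⟨_, rfl⟩
    have hE1 : 1 < E := by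
      rw [hE_def, show (1 : ℝ) = Real.exp 0 by simp]
      exact Real.exp_lt_exp.mpr hcpos
    have hEne : E ≠ 0 := by linarith
    have hEρ : ρ = E⁻¹ := by rw [hρ_def, hE_def, Real.exp_neg]
    have hEinv : E⁻¹ < 1 := inv_lt_one_of_one_lt₀ hE1
    have key : ρ / (1 - ρ) = 1 / (E - 1) := by
      rw [hEρ, div_eq_div_iff (by linarith : 1 - E⁻¹ ≠ 0) (by linarith : E - 1 ≠ 0)]
      field_simp
    have hcle : c ≤ E - 1 := by
      have := Real.add_one_le_exp c
      rw [hE_def]; linarith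
    have h2 : 1 / (E - 1) ≤ 1 / c := one_div_le_one_div_of_le hcpos hcle
    have h3 : 1 / c = (M - m) ^ 2 / (2 * ai ^ 2) := by
      rw [hc_def, one_div_div, hR_def]
    rw [key]
    rw [← h3]
    exact h2
  -- final computation
  intro T hT
  have hcard : ∀ ω, (((Finset.Icc 1 T).filter (fun t => a t ω ≠ i)).card : ℝ)
      = ∑ t ∈ Finset.Icc 1 T, N t ω := by
    intro ω
    rw [Finset.card_filter, Nat.cast_sum]
    refine Finset.sum_congr rfl fun t _ => ?_
    simp only [hN_def]
    split <;> simp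
  have hsplit : Finset.Icc 1 T = insert 1 (Finset.Icc 2 T) := by
    ext x
    simp only [Finset.mem_Icc, Finset.mem_insert]
    omega
  have hsum2 : ∑ t ∈ Finset.Icc 2 T, ∫ ω, N t ω ∂μ ≤ ρ / (1 - ρ) := by
    calc ∑ t ∈ Finset.Icc 2 T, ∫ ω, N t ω ∂μ ≤ ∑ t ∈ Finset.Icc 2 T, ρ ^ (t - 1) := by
          apply Finset.sum_le_sum
          intro t htmem
          rw [Finset.mem_Icc] at htmem
          have h2 : 1 ≤ t - 1 := by omega
          have h3 : t - 1 + 1 = t := by omega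
          have hh := hNsucc (t - 1) h2
          rw [h3] at hh
          exact hh
      _ = ∑ s ∈ Finset.range (T + 1 - 2), ρ ^ (2 + s - 1) := by
          rw [show Finset.Icc 2 T = Finset.Ico 2 (T + 1) from by rw [Finset.Ico_add_one_right_eq_Icc]]
          exact Finset.sum_Ico_eq_sum_range _ 2 (T + 1)
      _ = ρ * ∑ s ∈ Finset.range (T + 1 - 2), ρ ^ s := by
          rw [Finset.mul_sum]
          refine Finset.sum_congr rfl fun s _ => ?_
          rw [show 2 + s - 1 = s + 1 from by omega, pow_succ]
          ring
      _ ≤ ρ * (1 / (1 - ρ)) := mul_le_mul_of_nonneg_left (hgeom _) hρpos.le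
      _ = ρ / (1 - ρ) := by ring
  calc ∫ ω, (((Finset.Icc 1 T).filter (fun t => a t ω ≠ i)).card : ℝ) ∂μ
      = ∫ ω, ∑ t ∈ Finset.Icc 1 T, N t ω ∂μ := by
        apply integral_congr_ae
        filter_upwards with ω
        exact hcard ω
    _ = ∑ t ∈ Finset.Icc 1 T, ∫ ω, N t ω ∂μ := by
        apply integral_finset_sum
        intro t htmem
        exact hNint t (Finset.mem_Icc.mp htmem).1
    _ = ∫ ω, N 1 ω ∂μ + ∑ t ∈ Finset.Icc 2 T, ∫ ω, N t ω ∂μ := by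
        rw [hsplit, Finset.sum_insert (by simp [Finset.mem_Icc])]
    _ ≤ 1 + (M - m) ^ 2 / (2 * ai ^ 2) := by
        linarith [hN1, hsum2, htail]
end
end

section
/- Theorem 1, regret form (LRT achieves bounded regret). Let i ∈ {0,1} be the true demand model and consider a pricing process under model i following the LRT policy. Let r : Fin 2 → Fin 2 → ℝ be expected revenues satisfying r i i ≥ r i k for all k (arm i is optimal under model i). Set a_i = min over k ∈ Fin 2 of I(q i k ‖ q (1−i) k). Then the regret Δ_i(T) = T · r i i − E[Σ_{t=1}^T r i (a_t)] satisfies Δ_i(T) ≤ (1 + (M − m)²/(2 a_i²)) · max over k of (r i i − r i k) for every horizon T ≥ 1; in particular sup over T of Δ_i(T) is finite. -/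
open MeasureTheory ProbabilityTheory Finset Real

noncomputable section

variable {Ω : Type*} {mΩ : MeasurableSpace Ω}

lemma hoeffding_core (p : ℝ) (hp0 : 0 ≤ p) (hp1 : p ≤ 1) (x : ℝ) :
    (1 - p) + p * exp x ≤ exp (p * x + x ^ 2 / 8) := by
  set D : ℝ → ℝ := fun x => (1 - p) + p * exp x with hD
  have hDpos : ∀ x, 0 < D x := by
    intro x
    rcases eq_or_lt_of_le hp0 with h | h
    · simp [hD, ← h]
    · have := mul_pos h (exp_pos x)
      have : 0 ≤ 1 - p := by linarith
      simp only [hD]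
      nlinarith [mul_pos h (exp_pos x)]
  set f : ℝ → ℝ := fun x => p * x + x ^ 2 / 8 - Real.log (D x) with hf
  set f' : ℝ → ℝ := fun x => p + x / 4 - p * exp x / D x with hf'
  have hderiv : ∀ x, HasDerivAt f (f' x) x := by
    intro x
    have hexp : HasDerivAt (fun x => p * exp x) (p * exp x) x :=
      (Real.hasDerivAt_exp x).const_mul p
    have hDd : HasDerivAt D (p * exp x) x := by
      simpa [hD] using hexp.const_add (1 - p)
    have hlog : HasDerivAt (fun x => Real.log (D x)) (p * exp x / D x) x :=
      hDd.log (hDpos x).ne'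
    have h1 : HasDerivAt (fun x => p * x + x ^ 2 / 8) (p + x / 4) x := by
      have h2 : HasDerivAt (fun x : ℝ => p * x) p x := by
        simpa using (hasDerivAt_id x).const_mul p
      have h3 : HasDerivAt (fun x : ℝ => x ^ 2 / 8) (x / 4) x := by
        have := (hasDerivAt_pow 2 x).div_const 8
        convert this using 1 <;> try rfl
        ring
      exact h2.add h3
    exact h1.sub hlog
  have hderiv' : ∀ x, HasDerivAt f' (1/4 - p * (1 - p) * exp x / (D x) ^ 2) x := by
    intro x
    have hexp : HasDerivAt (fun x => p * exp x) (p * exp x) x :=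
      (Real.hasDerivAt_exp x).const_mul p
    have hDd : HasDerivAt D (p * exp x) x := by
      simpa [hD] using hexp.const_add (1 - p)
    have hquot : HasDerivAt (fun x => p * exp x / D x)
        ((p * exp x * D x - p * exp x * (p * exp x)) / (D x) ^ 2) x :=
      hexp.div hDd (hDpos x).ne'
    have h1 : HasDerivAt (fun x => p + x / 4) (1/4 : ℝ) x := by
      simpa using ((hasDerivAt_id x).div_const 4).const_add p
    have := h1.sub hquot
    convert this using 1 <;> try rfl
    have hd := (hDpos x).ne'
    field_simp [hD]
    ring
  set f'' : ℝ → ℝ := fun x => 1/4 - p * (1 - p) * exp x / (D x) ^ 2 with hf''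
  have hpp : ∀ x, 0 ≤ f'' x := by
    intro x
    have e : D x = 1 - p + p * exp x := rfl
    have hDx : (0:ℝ) < 1 - p + p * exp x := by
      rw [← e]; exact hDpos x
    have : p * (1 - p) * exp x / (D x) ^ 2 ≤ 1/4 := by
      rw [e, div_le_iff₀ (pow_pos hDx 2)]
      nlinarith [sq_nonneg ((1 - p) - p * exp x)]
    simp only [hf'']
    linarith
  have hmono' : Monotone f' := by
    have : ∀ x, 0 ≤ deriv f' x := by
      intro x
      rw [(hderiv' x).deriv]
      exact hpp x
    exact monotone_of_deriv_nonneg (fun x => (hderiv' x).differentiableAt) this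
  have hf'0 : f' 0 = 0 := by
    simp [hf', hD]
  have hcont : Continuous f := by
    have : Differentiable ℝ f := fun x => (hderiv x).differentiableAt
    exact this.continuous
  have hfnonneg : ∀ x, 0 ≤ f x := by
    have hf0 : f 0 = 0 := by simp [hf, hD]
    intro x
    rcases le_total 0 x with h | h
    · have hm : MonotoneOn f (Set.Ici 0) := by
        apply monotoneOn_of_deriv_nonneg (convex_Ici 0) (hcont.continuousOn)
        · intro z hz
          exact (hderiv z).differentiableAt.differentiableWithinAt
        · intro z hz
          rw [(hderiv z).deriv]
          have : (0:ℝ) ≤ z := by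
            simpa using interior_subset hz
          have := hmono' this
          rw [hf'0] at this
          linarith
      have := hm (Set.self_mem_Ici) (Set.mem_Ici.2 h) h
      rw [hf0] at this
      exact this
    · have hm : AntitoneOn f (Set.Iic 0) := by
        apply antitoneOn_of_deriv_nonpos (convex_Iic 0) (hcont.continuousOn)
        · intro z hz
          exact (hderiv z).differentiableAt.differentiableWithinAt
        · intro z hz
          have : z ≤ (0:ℝ) := by
            have := interior_subset hz
            simpa using this
          have := hmono' this
          rw [hf'0] at this
          rw [(hderiv z).deriv]
          linarith
      have := hm (Set.mem_Iic.2 h) (Set.self_mem_Iic) h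
      rw [hf0] at this
      exact this
  have := hfnonneg x
  simp only [hf] at this
  have hlog : Real.log (D x) ≤ p * x + x ^ 2 / 8 := by linarith
  calc (1 - p) + p * exp x = D x := rfl
    _ = exp (Real.log (D x)) := (exp_log (hDpos x)).symm
    _ ≤ exp (p * x + x ^ 2 / 8) := exp_le_exp.2 hlog


lemma hoeffding_two_point (p u v s : ℝ) (hp0 : 0 ≤ p) (hp1 : p ≤ 1) :
    p * exp (s * v) + (1 - p) * exp (s * u) ≤
      exp (s * (p * v + (1 - p) * u) + s ^ 2 * (v - u) ^ 2 / 8) := by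
  have h := hoeffding_core p hp0 hp1 (s * (v - u))
  have h2 := mul_le_mul_of_nonneg_right h (le_of_lt (exp_pos (s * u)))
  calc p * exp (s * v) + (1 - p) * exp (s * u)
      = ((1 - p) + p * exp (s * (v - u))) * exp (s * u) := by
        rw [add_mul, mul_assoc, ← exp_add]; ring_nf
    _ ≤ exp (p * (s * (v - u)) + (s * (v - u)) ^ 2 / 8) * exp (s * u) := h2
    _ = exp (s * (p * v + (1 - p) * u) + s ^ 2 * (v - u) ^ 2 / 8) := by
        rw [← exp_add]; ring_nf

lemma klBern_pos_s1 {α β : ℝ} (hα0 : 0 < α) (hα1 : α < 1) (hβ0 : 0 < β) (hβ1 : β < 1)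
    (hne : α ≠ β) : 0 < klBern α β := by
  have hα1' : (0:ℝ) < 1 - α := by linarith
  have hβ1' : (0:ℝ) < 1 - β := by linarith
  have h1 : Real.log (β / α) < β / α - 1 := by
    apply Real.log_lt_sub_one_of_pos (div_pos hβ0 hα0)
    intro h
    exact hne ((div_eq_one_iff_eq hα0.ne').mp h).symm
  have h2 : Real.log ((1 - β) / (1 - α)) < (1 - β) / (1 - α) - 1 := by
    apply Real.log_lt_sub_one_of_pos (div_pos hβ1' hα1')
    intro h
    have := (div_eq_one_iff_eq hα1'.ne').mp h
    apply hne; linarith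
  have e1 : α * (β / α) = β := by field_simp
  have e2 : (1 - α) * ((1 - β) / (1 - α)) = 1 - β := by field_simp
  have b1 : α * Real.log (β / α) < β - α := by nlinarith [mul_lt_mul_of_pos_left h1 hα0]
  have b2 : (1 - α) * Real.log ((1 - β) / (1 - α)) < α - β := by
    nlinarith [mul_lt_mul_of_pos_left h2 hα1']
  have r1 : Real.log (α / β) = - Real.log (β / α) := by
    rw [Real.log_div hα0.ne' hβ0.ne', Real.log_div hβ0.ne' hα0.ne']; ring
  have r2 : Real.log ((1 - α) / (1 - β)) = - Real.log ((1 - β) / (1 - α)) := by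
    rw [Real.log_div hα1'.ne' hβ1'.ne', Real.log_div hβ1'.ne' hα1'.ne']; ring
  unfold klBern
  rw [r1, r2]
  nlinarith



lemma fin2_cases (k : Fin 2) : k = 0 ∨ k = 1 := by revert k; decide

lemma integrable_of_bdd {μ : Measure Ω} [IsProbabilityMeasure μ] {f : Ω → ℝ} {b : ℝ}
    (hf : AEStronglyMeasurable f μ) (hb : ∀ ω, |f ω| ≤ b) : Integrable f μ :=
  (integrable_const b).mono' hf (ae_of_all _ fun ω => by
    simpa [Real.norm_eq_abs] using hb ω)

lemma abs_comp_fin2_le {a' : Ω → Fin 2} (F : Fin 2 → ℝ) (ω : Ω) :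
    |F (a' ω)| ≤ max |F 0| |F 1| := by
  rcases fin2_cases (a' ω) with h | h <;> rw [h]
  · exact le_max_left _ _
  · exact le_max_right _ _

lemma cond_step {μ : Measure Ω} [IsProbabilityMeasure μ] {ℱ : Filtration ℕ mΩ}
    {q : Fin 2 → Fin 2 → ℝ} {i : Fin 2} {a : ℕ → Ω → Fin 2} {y : ℕ → Ω → ℕ}
    (hproc : IsPricingProcess μ ℱ q i a y) (t : ℕ)
    (h : Fin 2 → ℕ → ℝ) (C : Ω → ℝ) (hC : Measurable[ℱ t] C)
    (bC : ℝ) (hbC : ∀ ω, |C ω| ≤ bC) :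
    ∫ ω, C ω * h (a (t + 1) ω) (y (t + 1) ω) ∂μ
      = ∫ ω, C ω * (q i (a (t + 1) ω) * h (a (t + 1) ω) 1
          + (1 - q i (a (t + 1) ω)) * h (a (t + 1) ω) 0) ∂μ := by
  have ht1 : (1:ℕ) ≤ t + 1 := Nat.succ_le_succ (Nat.zero_le t)
  have ha : Measurable[ℱ t] (a (t + 1)) := by
    simpa using hproc.meas_a (t + 1) ht1
  have hy : Measurable[ℱ (t + 1)] (y (t + 1)) := hproc.meas_y (t + 1) ht1
  have haΩ : Measurable (a (t + 1)) := ha.mono (ℱ.le t) le_rfl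
  have hyΩ : Measurable (y (t + 1)) := hy.mono (ℱ.le (t + 1)) le_rfl
  have hCΩ : Measurable C := hC.mono (ℱ.le t) le_rfl
  set A : Set Ω := {ω | y (t + 1) ω = 1} with hA
  have hAmeas : MeasurableSet A := hyΩ (measurableSet_singleton 1)
  set ind : Ω → ℝ := A.indicator (fun _ => (1:ℝ)) with hind
  have hind_meas : Measurable ind := measurable_const.indicator hAmeas
  have hind_bdd : ∀ ω, |ind ω| ≤ 1 := by
    intro ω
    by_cases hω : ω ∈ A
    · simp [hind, hω]
    · simp [hind, hω]
  set G : Ω → ℝ := fun ω => C ω * (h (a (t + 1) ω) 1 - h (a (t + 1) ω) 0) with hG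
  have hGF : Measurable[ℱ t] G :=
    hC.mul ((measurable_of_countable (fun k : Fin 2 => h k 1 - h k 0)).comp ha)
  have hGΩ : Measurable G := hGF.mono (ℱ.le t) le_rfl
  set bh : ℝ := max |h 0 1 - h 0 0| |h 1 1 - h 1 0| with hbh
  have hG_bdd : ∀ ω, |G ω| ≤ bC * bh := by
    intro ω
    have h1 := abs_comp_fin2_le (a' := a (t + 1)) (fun k => h k 1 - h k 0) ω
    calc |G ω| = |C ω| * |h (a (t + 1) ω) 1 - h (a (t + 1) ω) 0| := abs_mul _ _
      _ ≤ bC * bh :=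
          mul_le_mul (hbC ω) h1 (abs_nonneg _) ((abs_nonneg _).trans (hbC ω))
  have hint_ind : Integrable ind μ :=
    integrable_of_bdd hind_meas.aestronglyMeasurable hind_bdd
  have hint_Gind : Integrable (G * ind) μ := by
    apply integrable_of_bdd (hGΩ.mul hind_meas).aestronglyMeasurable (b := bC * bh)
    intro ω
    rw [Pi.mul_apply, abs_mul]
    exact le_trans (mul_le_of_le_one_right (abs_nonneg _) (hind_bdd ω)) (hG_bdd ω)
  have hint_h0 : Integrable (fun ω => C ω * h (a (t + 1) ω) 0) μ := by
    apply integrable_of_bdd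
      (hCΩ.mul ((measurable_of_countable (fun k : Fin 2 => h k 0)).comp haΩ)).aestronglyMeasurable
      (b := bC * max |h 0 0| |h 1 0|)
    intro ω
    rw [Pi.mul_apply, abs_mul]
    exact mul_le_mul (hbC ω) (abs_comp_fin2_le (a' := a (t+1)) (fun k => h k 0) ω)
      (abs_nonneg _) ((abs_nonneg _).trans (hbC ω))
  have hint_Gq : Integrable (fun ω => G ω * q i (a (t + 1) ω)) μ := by
    apply integrable_of_bdd
      (hGΩ.mul ((measurable_of_countable (q i)).comp haΩ)).aestronglyMeasurable
      (b := bC * bh * max |q i 0| |q i 1|)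
    intro ω
    rw [Pi.mul_apply, abs_mul]
    exact mul_le_mul (hG_bdd ω) (abs_comp_fin2_le (a' := a (t+1)) (q i) ω) (abs_nonneg _)
      (mul_nonneg ((abs_nonneg _).trans (hbC ω)) ((abs_nonneg _).trans (hG_bdd ω) |>.trans
        (le_refl _) |> fun _ => le_trans (abs_nonneg _) (le_max_left _ _)))
  -- pointwise decomposition
  have key : ∀ ω, C ω * h (a (t + 1) ω) (y (t + 1) ω)
      = C ω * h (a (t + 1) ω) 0 + G ω * ind ω := by
    intro ω
    rcases hproc.y_range (t + 1) ht1 ω with h0 | h1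
    · have : ω ∉ A := by simp [hA, h0]
      rw [h0]
      simp [hind, Set.indicator_of_notMem this, hG]
    · have : ω ∈ A := by simp [hA, h1]
      rw [h1]
      simp [hind, Set.indicator_of_mem this, hG]
      ring
  -- conditional expectation computation
  have sp := hproc.sale_prob (t + 1) ht1
  simp only [Nat.add_sub_cancel] at sp
  have pull : μ[G * ind|ℱ t] =ᵐ[μ] G * μ[ind|ℱ t] :=
    condExp_mul_of_stronglyMeasurable_left hGF.stronglyMeasurable hint_Gind hint_ind
  have cq : G * μ[ind|ℱ t] =ᵐ[μ] fun ω => G ω * q i (a (t + 1) ω) := by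
    filter_upwards [sp] with ω hω
    simp only [Pi.mul_apply]
    rw [hω]
  have int_Gind : ∫ ω, G ω * ind ω ∂μ = ∫ ω, G ω * q i (a (t + 1) ω) ∂μ := by
    have h1 : ∫ ω, (μ[G * ind|ℱ t]) ω ∂μ = ∫ ω, (G * ind) ω ∂μ :=
      integral_condExp (ℱ.le t)
    have h2 : ∫ ω, (μ[G * ind|ℱ t]) ω ∂μ = ∫ ω, G ω * q i (a (t + 1) ω) ∂μ :=
      integral_congr_ae (pull.trans cq)
    rw [← h2, h1]
    rfl
  calc ∫ ω, C ω * h (a (t + 1) ω) (y (t + 1) ω) ∂μ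
      = ∫ ω, (C ω * h (a (t + 1) ω) 0 + G ω * ind ω) ∂μ := by
        apply integral_congr_ae (ae_of_all _ key)
    _ = (∫ ω, C ω * h (a (t + 1) ω) 0 ∂μ) + ∫ ω, G ω * ind ω ∂μ :=
        integral_add hint_h0 hint_Gind
    _ = (∫ ω, C ω * h (a (t + 1) ω) 0 ∂μ) + ∫ ω, G ω * q i (a (t + 1) ω) ∂μ := by
        rw [int_Gind]
    _ = ∫ ω, (C ω * h (a (t + 1) ω) 0 + G ω * q i (a (t + 1) ω)) ∂μ :=
        (integral_add hint_h0 hint_Gq).symm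
    _ = ∫ ω, C ω * (q i (a (t + 1) ω) * h (a (t + 1) ω) 1
          + (1 - q i (a (t + 1) ω)) * h (a (t + 1) ω) 0) ∂μ := by
        apply integral_congr_ae (ae_of_all _ _)
        intro ω
        simp only [hG]
        ring


set_option maxHeartbeats 1000000 in
/-- **Theorem 1, regret form (LRT achieves bounded regret).** If the true demand model is `i`
and arm `i` is optimal under model `i` (`r i i ≥ r i k` for all `k`), then the regret
`Δᵢ(T) = T · r i i − E[∑_{t=1}^T r i (a_t)]` of the LRT policy is at most
`(1 + (M - m)²/(2 aᵢ²)) · max_k (r i i − r i k)` for every horizon `T ≥ 1`; in particular the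
regret is bounded uniformly in `T`. -/
theorem lrt_bounded_regret
    (μ : Measure Ω) [IsProbabilityMeasure μ] (ℱ : Filtration ℕ mΩ)
    (q : Fin 2 → Fin 2 → ℝ)
    (hq : ∀ i k, q i k ∈ Set.Ioo (0 : ℝ) 1)
    (hni : ∀ k, q 0 k ≠ q 1 k)
    (i : Fin 2) (a : ℕ → Ω → Fin 2) (y : ℕ → Ω → ℕ)
    (hproc : IsPricingProcess μ ℱ q i a y)
    (hpol : IsLRT q a y)
    (r : Fin 2 → Fin 2 → ℝ)
    (hr : ∀ k, r i k ≤ r i i)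
    (ai m M : ℝ)
    (hai : ai = Finset.univ.inf' ⟨0, Finset.mem_univ 0⟩
      (fun k : Fin 2 => klBern (q i k) (q (1 - i) k)))
    (hm : m = Finset.univ.inf' ⟨(0, 0), Finset.mem_univ _⟩
      (fun p : Fin 2 × Fin 2 =>
        Real.log (bern (q 1 p.1) (p.2 : ℕ) / bern (q 0 p.1) (p.2 : ℕ))))
    (hM : M = Finset.univ.sup' ⟨(0, 0), Finset.mem_univ _⟩
      (fun p : Fin 2 × Fin 2 =>
        Real.log (bern (q 1 p.1) (p.2 : ℕ) / bern (q 0 p.1) (p.2 : ℕ))))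
    (Δ : ℕ → ℝ)
    (hΔ : ∀ T, Δ T = (T : ℝ) * r i i - ∫ ω, ∑ t ∈ Finset.Icc 1 T, r i (a t ω) ∂μ) :
    (∀ T : ℕ, 1 ≤ T →
        Δ T ≤ (1 + (M - m) ^ 2 / (2 * ai ^ 2)) *
            Finset.univ.sup' ⟨0, Finset.mem_univ 0⟩ (fun k : Fin 2 => r i i - r i k)) ∧
      BddAbove (Set.range Δ) := by
  classical
  have hq0 : ∀ j k, 0 < q j k := fun j k => (hq j k).1
  have hq1 : ∀ j k, q j k < 1 := fun j k => (hq j k).2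
  have hi01 : i = 0 ∨ i = 1 := fin2_cases i
  set g : Fin 2 → ℕ → ℝ :=
    fun k n => Real.log (bern (q 1 k) n / bern (q 0 k) n) with hgdef
  set σ : ℝ := if i = 1 then 1 else -1 with hσ
  have bern1 : ∀ p : ℝ, bern p 1 = p := fun p => by simp [bern]
  have bern0 : ∀ p : ℝ, bern p 0 = 1 - p := fun p => by simp [bern]
  have hσ_cases : σ = 1 ∨ σ = -1 := by
    rw [hσ]; by_cases h : i = 1 <;> simp [h]
  -- bounds m ≤ g ≤ M
  have hm_le : ∀ k : Fin 2, ∀ n : Fin 2, m ≤ g k (n : ℕ) := by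
    intro k n
    rw [hm]
    exact Finset.inf'_le _ (Finset.mem_univ (k, n))
  have hM_ge : ∀ k : Fin 2, ∀ n : Fin 2, g k (n : ℕ) ≤ M := by
    intro k n
    rw [hM]
    exact Finset.le_sup' (fun p : Fin 2 × Fin 2 =>
      Real.log (bern (q 1 p.1) (p.2 : ℕ) / bern (q 0 p.1) (p.2 : ℕ))) (Finset.mem_univ (k, n))
  have hm0 : ∀ k, m ≤ g k 0 := fun k => by simpa using hm_le k 0
  have hm1 : ∀ k, m ≤ g k 1 := fun k => by simpa using hm_le k 1
  have hM0 : ∀ k, g k 0 ≤ M := fun k => by simpa using hM_ge k 0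
  have hM1 : ∀ k, g k 1 ≤ M := fun k => by simpa using hM_ge k 1
  -- M - m > 0
  have hgpos : 0 < M - m := by
    have e1 : g 0 1 = Real.log (q 1 0 / q 0 0) := by
      show Real.log (bern (q 1 0) 1 / bern (q 0 0) 1) = _
      rw [bern1, bern1]
    have e0 : g 0 0 = Real.log ((1 - q 1 0) / (1 - q 0 0)) := by
      show Real.log (bern (q 1 0) 0 / bern (q 0 0) 0) = _
      rw [bern0, bern0]
    rcases lt_or_gt_of_ne (hni 0) with hlt | hgt
    · have p1 : 0 < g 0 1 := by
        rw [e1]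
        exact Real.log_pos ((one_lt_div (hq0 0 0)).2 hlt)
      have p0 : g 0 0 < 0 := by
        rw [e0]
        apply Real.log_neg (div_pos (by linarith [hq1 1 0]) (by linarith [hq1 0 0]))
        rw [div_lt_one (by linarith [hq1 0 0])]
        linarith
      have := hm0 0; have := hM1 0; linarith
    · have p1 : g 0 1 < 0 := by
        rw [e1]
        apply Real.log_neg (div_pos (hq0 1 0) (hq0 0 0))
        rw [div_lt_one (hq0 0 0)]
        exact hgt
      have p0 : 0 < g 0 0 := by
        rw [e0]
        apply Real.log_pos
        rw [one_lt_div (by linarith [hq1 0 0] : (0:ℝ) < 1 - q 0 0)]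
        linarith
      have := hm1 0; have := hM0 0; linarith
  -- expressing g via logs
  have e1 : ∀ k, g k 1 = Real.log (q 1 k) - Real.log (q 0 k) := by
    intro k
    show Real.log (bern (q 1 k) 1 / bern (q 0 k) 1) = _
    rw [bern1, bern1, Real.log_div (hq0 1 k).ne' (hq0 0 k).ne']
  have e0 : ∀ k, g k 0 = Real.log (1 - q 1 k) - Real.log (1 - q 0 k) := by
    intro k
    show Real.log (bern (q 1 k) 0 / bern (q 0 k) 0) = _
    rw [bern0, bern0, Real.log_div (by linarith [hq1 1 k] : (1:ℝ) - q 1 k ≠ 0)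
      (by linarith [hq1 0 k] : (1:ℝ) - q 0 k ≠ 0)]
  -- mean of σ·increment equals the KL divergence
  have hmean : ∀ k, q i k * (σ * g k 1) + (1 - q i k) * (σ * g k 0)
      = klBern (q i k) (q (1 - i) k) := by
    intro k
    rcases hi01 with h | h <;> subst h
    · have hσ' : σ = -1 := by rw [hσ]; norm_num
      have h1i : (1 - 0 : Fin 2) = 1 := by decide
      rw [hσ', h1i]
      unfold klBern
      rw [Real.log_div (hq0 0 k).ne' (hq0 1 k).ne',
        Real.log_div (by linarith [hq1 0 k] : (1:ℝ) - q 0 k ≠ 0)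
          (by linarith [hq1 1 k] : (1:ℝ) - q 1 k ≠ 0), e1 k, e0 k]
      ring
    · have hσ' : σ = 1 := by rw [hσ]; norm_num
      have h1i : (1 - 1 : Fin 2) = 0 := by decide
      rw [hσ', h1i]
      unfold klBern
      rw [Real.log_div (hq0 1 k).ne' (hq0 0 k).ne',
        Real.log_div (by linarith [hq1 1 k] : (1:ℝ) - q 1 k ≠ 0)
          (by linarith [hq1 0 k] : (1:ℝ) - q 0 k ≠ 0), e1 k, e0 k]
      ring
  -- positivity of ai
  have hai_le : ∀ k, ai ≤ klBern (q i k) (q (1 - i) k) := by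
    intro k
    rw [hai]
    exact Finset.inf'_le _ (Finset.mem_univ k)
  have hai_pos : 0 < ai := by
    rw [hai]
    refine (Finset.lt_inf'_iff _).2 ?_
    intro k _
    apply klBern_pos_s1 (hq0 i k) (hq1 i k) (hq0 _ k) (hq1 _ k)
    rcases hi01 with h | h <;> subst h
    · have h1i : (1 - 0 : Fin 2) = 1 := by decide
      rw [h1i]; exact hni k
    · have h1i : (1 - 1 : Fin 2) = 0 := by decide
      rw [h1i]; exact fun hh => hni k hh.symm
  set s : ℝ := 4 * ai / (M - m) ^ 2 with hs
  have hs_pos : 0 < s := div_pos (by linarith) (pow_pos hgpos 2)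
  set c : ℝ := 2 * ai ^ 2 / (M - m) ^ 2 with hc
  have hc_pos : 0 < c := div_pos (by nlinarith) (pow_pos hgpos 2)
  set ρ : ℝ := Real.exp (-c) with hρ
  have hρ_pos : 0 < ρ := Real.exp_pos _
  have hρ_lt1 : ρ < 1 := by
    rw [hρ, Real.exp_lt_one_iff]
    linarith
  -- the per-arm one-step bound
  have hstep_k : ∀ k, q i k * Real.exp (-s * (σ * g k 1))
      + (1 - q i k) * Real.exp (-s * (σ * g k 0)) ≤ ρ := by
    intro k
    have h2p := hoeffding_two_point (q i k) (σ * g k 0) (σ * g k 1) (-s)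
      (hq0 i k).le (hq1 i k).le
    have hvar : (σ * g k 1 - σ * g k 0) ^ 2 ≤ (M - m) ^ 2 := by
      rcases hσ_cases with h | h <;> rw [h] <;>
        [skip; (rw [show (-1 * g k 1 - -1 * g k 0) = -(1 * g k 1 - 1 * g k 0) by ring,
          neg_sq])] <;>
      · apply sq_le_sq' <;> nlinarith [hm0 k, hm1 k, hM0 k, hM1 k]
    have hmean_ge : ai ≤ q i k * (σ * g k 1) + (1 - q i k) * (σ * g k 0) :=
      (hmean k) ▸ hai_le k
    have hexp_le : (-s) * (q i k * (σ * g k 1) + (1 - q i k) * (σ * g k 0))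
        + (-s) ^ 2 * (σ * g k 1 - σ * g k 0) ^ 2 / 8 ≤ -c := by
      have h1 : (-s) * (q i k * (σ * g k 1) + (1 - q i k) * (σ * g k 0)) ≤ -s * ai := by
        have := mul_le_mul_of_nonneg_left hmean_ge hs_pos.le
        linarith
      have h2 : (-s) ^ 2 * (σ * g k 1 - σ * g k 0) ^ 2 / 8 ≤ s ^ 2 * (M - m) ^ 2 / 8 := by
        have := mul_le_mul_of_nonneg_left hvar (sq_nonneg s)
        rw [neg_pow]
        nlinarith
      have h3 : -s * ai + s ^ 2 * (M - m) ^ 2 / 8 = -c := by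
        have hMm : (M - m) ^ 2 ≠ 0 := (pow_pos hgpos 2).ne'
        rw [hs, hc]
        field_simp
        ring
      linarith
    calc q i k * Real.exp (-s * (σ * g k 1)) + (1 - q i k) * Real.exp (-s * (σ * g k 0))
        ≤ Real.exp ((-s) * (q i k * (σ * g k 1) + (1 - q i k) * (σ * g k 0))
            + (-s) ^ 2 * (σ * g k 1 - σ * g k 0) ^ 2 / 8) := h2p
      _ ≤ ρ := by rw [hρ]; exact Real.exp_le_exp.2 hexp_le
  -- the process Z
  set Z : ℕ → Ω → ℝ := fun t ω => Real.exp (-s * (σ * LLR q a y t ω)) with hZdef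
  have hZ0 : ∀ ω, Z 0 ω = 1 := by
    intro ω
    simp [hZdef, LLR]
  have hZpos : ∀ t ω, 0 < Z t ω := fun t ω => Real.exp_pos _
  have hLLR_g : ∀ t ω, LLR q a y t ω = ∑ j ∈ Finset.Icc 1 t, g (a j ω) (y j ω) :=
    fun t ω => rfl
  have hZsucc : ∀ t ω, Z (t + 1) ω
      = Z t ω * Real.exp (-s * (σ * g (a (t + 1) ω) (y (t + 1) ω))) := by
    intro t ω
    have hL : LLR q a y (t + 1) ω = LLR q a y t ω + g (a (t + 1) ω) (y (t + 1) ω) := by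
      rw [hLLR_g, hLLR_g, Finset.sum_Icc_succ_top (Nat.succ_le_succ (Nat.zero_le t))]
    simp only [hZdef]
    rw [hL, ← Real.exp_add]
    ring_nf
  -- measurability
  have hLLR_meas : ∀ t, Measurable[ℱ t] (LLR q a y t) := by
    intro t
    have : (LLR q a y t) = fun ω => ∑ j ∈ Finset.Icc 1 t, g (a j ω) (y j ω) := by
      funext ω; exact hLLR_g t ω
    rw [this]
    apply Finset.measurable_sum
    intro j hj
    have hj1 : 1 ≤ j := (Finset.mem_Icc.mp hj).1
    have hjt : j ≤ t := (Finset.mem_Icc.mp hj).2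
    have haj : Measurable[ℱ t] (a j) :=
      (hproc.meas_a j hj1).mono (ℱ.mono (le_trans (Nat.sub_le j 1) hjt)) le_rfl
    have hyj : Measurable[ℱ t] (y j) := (hproc.meas_y j hj1).mono (ℱ.mono hjt) le_rfl
    exact (measurable_of_countable (fun p : Fin 2 × ℕ => g p.1 p.2)).comp (haj.prodMk hyj)
  have hZ_meas : ∀ t, Measurable[ℱ t] (Z t) := by
    intro t
    apply Measurable.comp Real.measurable_exp
    exact ((hLLR_meas t).const_mul σ).const_mul (-s)
  -- uniform bound
  set B : ℝ := |m| + |M| with hB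
  have hg_bdd : ∀ k (n : ℕ), n = 0 ∨ n = 1 → |g k n| ≤ B := by
    intro k n hn
    rcases hn with h | h <;> subst h <;> rw [abs_le, hB] <;>
      constructor
    · nlinarith [hm0 k, abs_nonneg M, neg_abs_le m]
    · nlinarith [hM0 k, abs_nonneg m, le_abs_self M]
    · nlinarith [hm1 k, abs_nonneg M, neg_abs_le m]
    · nlinarith [hM1 k, abs_nonneg m, le_abs_self M]
  have hLLR_bdd : ∀ t ω, |LLR q a y t ω| ≤ t * B := by
    intro t ω
    rw [hLLR_g]
    calc |∑ j ∈ Finset.Icc 1 t, g (a j ω) (y j ω)|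
        ≤ ∑ j ∈ Finset.Icc 1 t, |g (a j ω) (y j ω)| := Finset.abs_sum_le_sum_abs _ _
      _ ≤ ∑ j ∈ Finset.Icc 1 t, B := by
          apply Finset.sum_le_sum
          intro j hj
          exact hg_bdd _ _ (hproc.y_range j (Finset.mem_Icc.mp hj).1 ω)
      _ = t * B := by
          rw [Finset.sum_const, Nat.card_Icc, Nat.add_sub_cancel, nsmul_eq_mul]
  have hσabs : |σ| = 1 := by
    rcases hσ_cases with h | h <;> rw [h] <;> norm_num
  have hZ_bdd : ∀ t ω, |Z t ω| ≤ Real.exp (s * (t * B)) := by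
    intro t ω
    rw [abs_of_pos (hZpos t ω)]
    apply Real.exp_le_exp.2
    have h1 : -s * (σ * LLR q a y t ω) ≤ |(-s) * (σ * LLR q a y t ω)| := le_abs_self _
    have h2 : |(-s) * (σ * LLR q a y t ω)| = s * |LLR q a y t ω| := by
      rw [abs_mul, abs_mul, abs_neg, abs_of_pos hs_pos, hσabs, one_mul]
    calc -s * (σ * LLR q a y t ω) ≤ s * |LLR q a y t ω| := by rw [← h2]; exact h1
      _ ≤ s * (t * B) := mul_le_mul_of_nonneg_left (hLLR_bdd t ω) hs_pos.le
  have hZ_int : ∀ t, Integrable (Z t) μ := fun t =>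
    integrable_of_bdd ((hZ_meas t).mono (ℱ.le t) le_rfl).aestronglyMeasurable (hZ_bdd t)
  -- one-step inequality for expectations
  have hEZ_succ : ∀ t, ∫ ω, Z (t + 1) ω ∂μ ≤ ρ * ∫ ω, Z t ω ∂μ := by
    intro t
    have ht1 : (1:ℕ) ≤ t + 1 := Nat.succ_le_succ (Nat.zero_le t)
    have haΩ : Measurable (a (t + 1)) :=
      (hproc.meas_a (t + 1) ht1).mono (ℱ.le _) le_rfl
    set h : Fin 2 → ℕ → ℝ := fun k n => Real.exp (-s * (σ * g k n)) with hh
    have h1 : ∫ ω, Z (t + 1) ω ∂μ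
        = ∫ ω, Z t ω * h (a (t + 1) ω) (y (t + 1) ω) ∂μ :=
      integral_congr_ae (ae_of_all _ fun ω => hZsucc t ω)
    rw [h1, cond_step hproc t h (Z t) (hZ_meas t) _ (hZ_bdd t)]
    have hint1 : Integrable (fun ω => Z t ω * (q i (a (t + 1) ω) * h (a (t + 1) ω) 1
        + (1 - q i (a (t + 1) ω)) * h (a (t + 1) ω) 0)) μ := by
      apply integrable_of_bdd (b := Real.exp (s * (t * B)) *
        max |q i 0 * h 0 1 + (1 - q i 0) * h 0 0| |q i 1 * h 1 1 + (1 - q i 1) * h 1 0|)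
      · apply Measurable.aestronglyMeasurable
        apply ((hZ_meas t).mono (ℱ.le t) le_rfl).mul
        exact (measurable_of_countable
          (fun k : Fin 2 => q i k * h k 1 + (1 - q i k) * h k 0)).comp haΩ
      · intro ω
        rw [abs_mul]
        apply mul_le_mul (hZ_bdd t ω)
          (abs_comp_fin2_le (a' := a (t + 1))
            (fun k => q i k * h k 1 + (1 - q i k) * h k 0) ω)
          (abs_nonneg _) ((abs_nonneg _).trans (hZ_bdd t ω))
    calc ∫ ω, Z t ω * (q i (a (t + 1) ω) * h (a (t + 1) ω) 1
          + (1 - q i (a (t + 1) ω)) * h (a (t + 1) ω) 0) ∂μ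
        ≤ ∫ ω, ρ * Z t ω ∂μ := by
          apply integral_mono hint1 ((hZ_int t).const_mul ρ)
          intro ω
          have := hstep_k (a (t + 1) ω)
          calc Z t ω * (q i (a (t + 1) ω) * h (a (t + 1) ω) 1
                + (1 - q i (a (t + 1) ω)) * h (a (t + 1) ω) 0)
              ≤ Z t ω * ρ :=
                mul_le_mul_of_nonneg_left this (hZpos t ω).le
            _ = ρ * Z t ω := mul_comm _ _
      _ = ρ * ∫ ω, Z t ω ∂μ := integral_const_mul ρ _
  have hEZ : ∀ t, ∫ ω, Z t ω ∂μ ≤ ρ ^ t := by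
    intro t
    induction t with
    | zero =>
      have : ∫ ω, Z 0 ω ∂μ = ∫ _ω, (1:ℝ) ∂μ := integral_congr_ae (ae_of_all _ hZ0)
      rw [this]
      simp
    | succ n ih =>
      calc ∫ ω, Z (n + 1) ω ∂μ ≤ ρ * ∫ ω, Z n ω ∂μ := hEZ_succ n
        _ ≤ ρ * ρ ^ n := mul_le_mul_of_nonneg_left ih hρ_pos.le
        _ = ρ ^ (n + 1) := (pow_succ' ρ n).symm
  -- gap facts
  set gap : ℝ := Finset.univ.sup' ⟨0, Finset.mem_univ 0⟩ (fun k : Fin 2 => r i i - r i k)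
    with hgap
  have hgap_le : ∀ k, r i i - r i k ≤ gap := by
    intro k
    rw [hgap]
    exact Finset.le_sup' (fun k : Fin 2 => r i i - r i k) (Finset.mem_univ k)
  have hgap_nonneg : 0 ≤ gap := by
    have := hgap_le i
    simpa using this
  -- pointwise regret bound
  have hpw : ∀ t ω, r i i - r i (a (t + 1) ω) ≤ gap * Z t ω := by
    intro t ω
    by_cases hcase : a (t + 1) ω = i
    · rw [hcase, sub_self]
      exact mul_nonneg hgap_nonneg (hZpos t ω).le
    · have hZ1 : 1 ≤ Z t ω := by
        rcases Nat.eq_zero_or_pos t with ht | ht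
        · subst ht; rw [hZ0]
        · have hp := hpol t ht ω
          have hσL : σ * LLR q a y t ω ≤ 0 := by
            rcases hi01 with h | h <;> subst h
            · have hσ' : σ = -1 := by rw [hσ]; norm_num
              have hL : 0 ≤ LLR q a y t ω := by
                by_contra hneg
                push_neg at hneg
                rw [if_neg (by linarith)] at hp
                exact hcase hp
              rw [hσ']
              nlinarith
            · have hσ' : σ = 1 := by rw [hσ]; norm_num
              have hL : LLR q a y t ω < 0 := by
                by_contra hneg
                push_neg at hneg
                rw [if_pos hneg] at hp
                exact hcase hp
              rw [hσ']
              nlinarith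
          rw [show (1:ℝ) = Real.exp 0 from (Real.exp_zero).symm]
          apply Real.exp_le_exp.2
          nlinarith
      calc r i i - r i (a (t + 1) ω) ≤ gap := hgap_le _
        _ = gap * 1 := (mul_one gap).symm
        _ ≤ gap * Z t ω := mul_le_mul_of_nonneg_left hZ1 hgap_nonneg
  -- integrability of rewards
  have hr_int : ∀ t, 1 ≤ t → Integrable (fun ω => r i (a t ω)) μ := by
    intro t ht
    apply integrable_of_bdd (b := max |r i 0| |r i 1|)
    · exact ((measurable_of_countable (r i)).comp
        ((hproc.meas_a t ht).mono (ℱ.le _) le_rfl)).aestronglyMeasurable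
    · intro ω
      exact abs_comp_fin2_le (a' := a t) (r i) ω
  have hF10 : ∀ t, ∫ ω, (r i i - r i (a (t + 1) ω)) ∂μ ≤ gap * ρ ^ t := by
    intro t
    calc ∫ ω, (r i i - r i (a (t + 1) ω)) ∂μ
        ≤ ∫ ω, gap * Z t ω ∂μ := by
          apply integral_mono ((integrable_const (r i i)).sub
            (hr_int (t + 1) (Nat.succ_le_succ (Nat.zero_le t)))) ((hZ_int t).const_mul gap)
          exact hpw t
      _ = gap * ∫ ω, Z t ω ∂μ := integral_const_mul gap _
      _ ≤ gap * ρ ^ t := mul_le_mul_of_nonneg_left (hEZ t) hgap_nonneg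
  -- geometric series bound
  have hgeom : ∀ T : ℕ, ∑ j ∈ Finset.range T, ρ ^ j ≤ 1 / (1 - ρ) := by
    intro T
    rw [le_div_iff₀ (by linarith : (0:ℝ) < 1 - ρ)]
    have := geom_sum_mul ρ T
    nlinarith [pow_nonneg hρ_pos.le T]
  -- constant computation
  have hconst : 1 / (1 - ρ) ≤ 1 + (M - m) ^ 2 / (2 * ai ^ 2) := by
    have hec : c + 1 ≤ Real.exp c := Real.add_one_le_exp c
    have hρle : ρ ≤ 1 / (1 + c) := by
      rw [hρ, Real.exp_neg, one_div]
      apply inv_anti₀ (by linarith)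
      linarith
    have hden : c / (1 + c) ≤ 1 - ρ := by
      have : 1 - 1 / (1 + c) = c / (1 + c) := by
        field_simp
        ring
      linarith [hρle, this]
    have hcc : 0 < c / (1 + c) := div_pos hc_pos (by linarith)
    have h1 : 1 / (1 - ρ) ≤ 1 / (c / (1 + c)) :=
      one_div_le_one_div_of_le hcc hden
    have h2 : 1 / (c / (1 + c)) = 1 + 1 / c := by
      rw [one_div_div]
      field_simp
      ring
    have h3 : 1 / c = (M - m) ^ 2 / (2 * ai ^ 2) := by
      rw [hc, one_div_div]
    linarith [h1, h2 ▸ h1, h3 ▸ (h2 ▸ h1)]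
  -- main bound for T ≥ 1
  have main : ∀ T : ℕ, 1 ≤ T →
      Δ T ≤ (1 + (M - m) ^ 2 / (2 * ai ^ 2)) * gap := by
    intro T _
    rw [hΔ T]
    have hsum : ∫ ω, ∑ t ∈ Finset.Icc 1 T, r i (a t ω) ∂μ
        = ∑ t ∈ Finset.Icc 1 T, ∫ ω, r i (a t ω) ∂μ :=
      integral_finset_sum _ (fun t ht => hr_int t (Finset.mem_Icc.mp ht).1)
    rw [hsum]
    have hTcast : (T : ℝ) * r i i = ∑ _t ∈ Finset.Icc 1 T, r i i := by
      rw [Finset.sum_const, Nat.card_Icc, Nat.add_sub_cancel, nsmul_eq_mul]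
    rw [hTcast, ← Finset.sum_sub_distrib]
    have hterm : ∀ t, 1 ≤ t → r i i - ∫ ω, r i (a t ω) ∂μ
        = ∫ ω, (r i i - r i (a t ω)) ∂μ := by
      intro t ht
      rw [integral_sub (integrable_const _) (hr_int t ht), integral_const]
      simp
    calc ∑ t ∈ Finset.Icc 1 T, (r i i - ∫ ω, r i (a t ω) ∂μ)
        = ∑ j ∈ Finset.range T, (r i i - ∫ ω, r i (a (1 + j) ω) ∂μ) := by
          rw [show Finset.Icc 1 T = Finset.Ico 1 (T + 1) from (Finset.Ico_succ_right_eq_Icc 1 T).symm,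
            Finset.sum_Ico_eq_sum_range]
          simp
      _ ≤ ∑ j ∈ Finset.range T, gap * ρ ^ j := by
          apply Finset.sum_le_sum
          intro j _
          rw [hterm (1 + j) (Nat.le_add_right 1 j), add_comm 1 j]
          exact hF10 j
      _ = gap * ∑ j ∈ Finset.range T, ρ ^ j := by
          rw [Finset.mul_sum]
      _ ≤ gap * (1 / (1 - ρ)) := mul_le_mul_of_nonneg_left (hgeom T) hgap_nonneg
      _ ≤ gap * (1 + (M - m) ^ 2 / (2 * ai ^ 2)) :=
          mul_le_mul_of_nonneg_left hconst hgap_nonneg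
      _ = (1 + (M - m) ^ 2 / (2 * ai ^ 2)) * gap := mul_comm _ _
  refine ⟨main, ?_⟩
  refine ⟨(1 + (M - m) ^ 2 / (2 * ai ^ 2)) * gap, ?_⟩
  rintro x ⟨T, rfl⟩
  rcases Nat.eq_zero_or_pos T with hT | hT
  · subst hT
    have : Δ 0 = 0 := by
      rw [hΔ 0]
      simp
    rw [this]
    apply mul_nonneg _ hgap_nonneg
    have : 0 ≤ (M - m) ^ 2 / (2 * ai ^ 2) := by positivity
    linarith
  · exact main T hT
end
end

section
/- Complete learning of the LRT policy. Let i ∈ {0,1} be the true demand model and consider a pricing process under model i following the LRT policy. Then almost surely the set {t ≥ 1 : a_t ≠ i} is finite; equivalently, with probability one there exists T₀ such that a_t = i for all t ≥ T₀, i.e., the LRT policy eventually settles at the optimal price under the true demand model. -/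
set_option maxHeartbeats 1000000


open MeasureTheory ProbabilityTheory Finset Real

noncomputable section

variable {Ω : Type*} {mΩ : MeasurableSpace Ω}

/- ### Auxiliary lemmas -/


lemma bern_zero (p : ℝ) : bern p 0 = 1 - p := by simp [bern]
lemma bern_one (p : ℝ) : bern p 1 = p := by simp [bern]

lemma sqrt_lt_half {a b : ℝ} (ha : 0 ≤ a) (hb : 0 ≤ b) (hne : a ≠ b) :
    Real.sqrt (a * b) < (a + b) / 2 := by
  have h1 := Real.sq_sqrt ha
  have h2 := Real.sq_sqrt hb
  have h3 : Real.sqrt a ≠ Real.sqrt b := fun h => hne (by rw [← h1, ← h2, h])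
  have h4 : (0:ℝ) < (Real.sqrt a - Real.sqrt b)^2 := by
    have := sub_ne_zero.mpr h3; positivity
  rw [Real.sqrt_mul ha]
  nlinarith [Real.sqrt_nonneg a, Real.sqrt_nonneg b]

lemma bhatta_lt_one {p r : ℝ} (hp : p ∈ Set.Ioo (0:ℝ) 1) (hr : r ∈ Set.Ioo (0:ℝ) 1)
    (hne : p ≠ r) :
    Real.sqrt (p * r) + Real.sqrt ((1 - p) * (1 - r)) < 1 := by
  have h1 : Real.sqrt (p * r) < (p + r) / 2 := sqrt_lt_half hp.1.le hr.1.le hne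
  have h2 : Real.sqrt ((1-p) * (1-r)) < ((1-p) + (1-r)) / 2 :=
    sqrt_lt_half (by linarith [hp.2]) (by linarith [hr.2]) (by intro h; apply hne; linarith)
  linarith

lemma exp_half_log {x : ℝ} (hx : 0 < x) : Real.exp (Real.log x / 2) = Real.sqrt x := by
  rw [← Real.log_sqrt hx.le, Real.exp_log (Real.sqrt_pos.mpr hx)]

lemma mul_sqrt_div {a b : ℝ} (ha : 0 < a) (hb : 0 ≤ b) :
    a * Real.sqrt (b / a) = Real.sqrt (a * b) := by
  rw [show a * b = a^2 * (b/a) by field_simp, Real.sqrt_mul (by positivity),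
    Real.sqrt_sq ha.le]

lemma mul_exp_half_log_div {u w : ℝ} (hu : 0 < u) (hw : 0 < w) :
    u * Real.exp (2⁻¹ * Real.log (w / u)) = Real.sqrt (u * w) := by
  rw [show (2:ℝ)⁻¹ * Real.log (w/u) = Real.log (w/u) / 2 by ring,
    exp_half_log (by positivity), mul_sqrt_div hu hw.le]

lemma mul_exp_neg_half_log_div {u w : ℝ} (hu : 0 < u) (hw : 0 < w) :
    u * Real.exp (-(2⁻¹) * Real.log (u / w)) = Real.sqrt (u * w) := by
  rw [show -(2:ℝ)⁻¹ * Real.log (u/w) = 2⁻¹ * Real.log (w/u) by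
    rw [show Real.log (w/u) = Real.log ((u/w)⁻¹) by rw [inv_div], Real.log_inv]; ring]
  exact mul_exp_half_log_div hu hw

/-- **Complete learning of the LRT policy.** If the true demand model is `i`, then almost
surely the set `{t ≥ 1 : a_t ≠ i}` is finite; equivalently, with probability one there exists
`T₀` such that `a_t = i` for all `t ≥ T₀`, i.e., the LRT policy eventually settles at the
optimal price under the true demand model. -/
theorem lrt_complete_learning
    (μ : Measure Ω) [IsProbabilityMeasure μ] (ℱ : Filtration ℕ mΩ)
    (q : Fin 2 → Fin 2 → ℝ)
    (hq : ∀ i k, q i k ∈ Set.Ioo (0 : ℝ) 1)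
    (hni : ∀ k, q 0 k ≠ q 1 k)
    (i : Fin 2) (a : ℕ → Ω → Fin 2) (y : ℕ → Ω → ℕ)
    (hproc : IsPricingProcess μ ℱ q i a y)
    (hpol : IsLRT q a y) :
    ∀ᵐ ω ∂μ, {t : ℕ | 1 ≤ t ∧ a t ω ≠ i}.Finite ∧ ∃ T₀, ∀ t, T₀ ≤ t → a t ω = i := by
  classical
  have hi2 : i = 0 ∨ i = 1 := by fin_cases i <;> simp
  obtain ⟨c, hc⟩ : ∃ x : ℝ, x = if i = 0 then 2⁻¹ else -2⁻¹ := ⟨_, rfl⟩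
  obtain ⟨v, hv⟩ : ∃ x : Fin 2 → ℕ → ℝ,
      x = fun k yy => Real.exp (c * Real.log (bern (q 1 k) yy / bern (q 0 k) yy)) := ⟨_, rfl⟩
  obtain ⟨X, hX⟩ : ∃ x : ℕ → Ω → ℝ, x = fun t ω => Real.exp (c * LLR q a y t ω) := ⟨_, rfl⟩
  have hXpos : ∀ t ω, 0 < X t ω := by intro t ω; simp only [hX]; exact Real.exp_pos _
  have hX0 : X 0 = fun _ => 1 := by
    funext ω; simp [hX, LLR]
  have hXsucc : ∀ t, X (t+1) = fun ω => X t ω * v (a (t+1) ω) (y (t+1) ω) := by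
    intro t; funext ω
    simp only [hX, hv, LLR]
    rw [Finset.sum_Icc_succ_top (Nat.le_add_left 1 t), mul_add, Real.exp_add]
  have hvpos : ∀ k yy, 0 < v k yy := by intro k yy; simp only [hv]; exact Real.exp_pos _
  obtain ⟨C, hC⟩ : ∃ x : ℝ, x = max (max (v 0 0) (v 0 1)) (max (v 1 0) (v 1 1)) := ⟨_, rfl⟩
  have hvC : ∀ k : Fin 2, v k 0 ≤ C ∧ v k 1 ≤ C := by
    intro k
    rw [hC]
    fin_cases k
    · exact ⟨le_max_of_le_left (le_max_left _ _), le_max_of_le_left (le_max_right _ _)⟩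
    · exact ⟨le_max_of_le_right (le_max_left _ _), le_max_of_le_right (le_max_right _ _)⟩
  have hCpos : 0 < C := lt_of_lt_of_le (hvpos 0 0) (hvC 0).1
  -- the Bhattacharyya coefficients
  obtain ⟨ρk, hρk⟩ : ∃ x : Fin 2 → ℝ,
      x = fun k => Real.sqrt (q 0 k * q 1 k) + Real.sqrt ((1 - q 0 k) * (1 - q 1 k)) := ⟨_, rfl⟩
  obtain ⟨ρ, hρ⟩ : ∃ x : ℝ, x = max (ρk 0) (ρk 1) := ⟨_, rfl⟩
  have hρk_lt : ∀ k, ρk k < 1 := by intro k; rw [hρk]; exact bhatta_lt_one (hq 0 k) (hq 1 k) (hni k)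
  have hρk_le : ∀ k, ρk k ≤ ρ := by
    intro k; rw [hρ]; fin_cases k
    · exact le_max_left _ _
    · exact le_max_right _ _
  have hρ1 : ρ < 1 := by rw [hρ]; exact max_lt (hρk_lt 0) (hρk_lt 1)
  have hρ0 : 0 < ρ := by
    refine lt_of_lt_of_le ?_ (hρk_le 0)
    have h1 : 0 < Real.sqrt (q 0 0 * q 1 0) :=
      Real.sqrt_pos.mpr (mul_pos (hq 0 0).1 (hq 1 0).1)
    have h2 : 0 ≤ Real.sqrt ((1 - q 0 0) * (1 - q 1 0)) := Real.sqrt_nonneg _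
    simp only [hρk]; linarith
  -- key pointwise identity
  have hkey : ∀ k : Fin 2, v k 0 + (v k 1 - v k 0) * q i k = ρk k := by
    intro k
    have h00 := (hq 0 k).1; have h01 := (hq 0 k).2
    have h10 := (hq 1 k).1; have h11 := (hq 1 k).2
    have e : v k 0 + (v k 1 - v k 0) * q i k = (1 - q i k) * v k 0 + q i k * v k 1 := by
      ring
    rw [e]
    rcases hi2 with rfl | rfl
    · have hcv : c = 2⁻¹ := by simp [hc]
      simp only [hv, hcv, bern_zero, bern_one, hρk]
      rw [mul_exp_half_log_div (by linarith) (by linarith),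
        mul_exp_half_log_div h00 h10]
      ring
    · have hcv : c = -2⁻¹ := by simp [hc]
      simp only [hv, hcv, bern_zero, bern_one, hρk]
      rw [show Real.log ((1 - q 1 k) / (1 - q 0 k)) = Real.log (((1 - q 0 k))⁻¹ * (1 - q 1 k)) by
            rw [div_eq_inv_mul],
        show Real.log (q 1 k / q 0 k) = Real.log ((q 0 k)⁻¹ * q 1 k) by rw [div_eq_inv_mul]]
      rw [show ((1 - q 0 k))⁻¹ * (1 - q 1 k) = (1 - q 1 k) / (1 - q 0 k) by ring,
        show (q 0 k)⁻¹ * q 1 k = q 1 k / q 0 k by ring]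
      rw [mul_exp_neg_half_log_div (by linarith : (0:ℝ) < 1 - q 1 k) (by linarith),
        mul_exp_neg_half_log_div h10 h00]
      rw [mul_comm (1 - q 1 k), mul_comm (q 1 k)]
      ring
  -- measurability
  have hGmeas : ∀ t, Measurable[ℱ (t+1)] (fun ω => v (a (t+1) ω) (y (t+1) ω)) := by
    intro t
    exact (measurable_of_countable (fun p : Fin 2 × ℕ => v p.1 p.2)).comp
      (((hproc.meas_a (t+1) (Nat.le_add_left 1 t)).mono (ℱ.mono t.le_succ) le_rfl).prodMk
        (hproc.meas_y (t+1) (Nat.le_add_left 1 t)))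
  have hXmeas : ∀ t, Measurable[ℱ t] (X t) := by
    intro t; induction t with
    | zero => rw [hX0]; exact measurable_const
    | succ t ih =>
      rw [hXsucc t]
      exact (ih.mono (ℱ.mono t.le_succ) le_rfl).mul (hGmeas t)
  obtain ⟨M, hM⟩ : ∃ x : ℕ → ℝ, x = fun t => (max C 1) ^ t := ⟨_, rfl⟩
  have hMpos : ∀ t, 0 < M t := by intro t; rw [hM]; exact pow_pos (lt_of_lt_of_le one_pos (le_max_right _ _)) t
  have hXle : ∀ t ω, X t ω ≤ M t := by
    intro t; induction t with
    | zero => intro ω; rw [hX0, hM]; simp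
    | succ t ih =>
      intro ω
      rw [hXsucc t]
      have hy : v (a (t+1) ω) (y (t+1) ω) ≤ max C 1 := by
        rcases hproc.y_range (t+1) (Nat.le_add_left 1 t) ω with h0 | h1
        · rw [h0]; exact le_max_of_le_left (hvC _).1
        · rw [h1]; exact le_max_of_le_left (hvC _).2
      calc X t ω * v (a (t+1) ω) (y (t+1) ω) ≤ M t * max C 1 :=
            mul_le_mul (ih ω) hy (hvpos _ _).le (hMpos t).le
        _ = M (t+1) := by rw [hM]; ring
  have bdd_int : ∀ (f : Ω → ℝ) (K : ℝ), Measurable f → (∀ ω, |f ω| ≤ K) → Integrable f μ :=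
    fun f K hf hK => (integrable_const K).mono' hf.aestronglyMeasurable
      (ae_of_all _ fun ω => by rw [Real.norm_eq_abs]; exact hK ω)
  have hXmeas' : ∀ t, Measurable (X t) := fun t => (hXmeas t).mono (ℱ.le t) le_rfl
  have hXint : ∀ t, Integrable (X t) μ := fun t =>
    bdd_int _ (M t) (hXmeas' t) (fun ω => by
      rw [abs_of_pos (hXpos t ω)]; exact hXle t ω)
  -- the main expectation bound
  have hE : ∀ t, ∫ ω, X t ω ∂μ ≤ ρ ^ t := by
    intro t; induction t with
    | zero => rw [hX0]; simp
    | succ t ih =>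
      have h1t : (1:ℕ) ≤ t + 1 := Nat.le_add_left 1 t
      obtain ⟨A, hA⟩ : ∃ x : Ω → ℝ, x = fun ω => v (a (t+1) ω) 0 := ⟨_, rfl⟩
      obtain ⟨B, hB⟩ : ∃ x : Ω → ℝ, x = fun ω => v (a (t+1) ω) 1 - v (a (t+1) ω) 0 := ⟨_, rfl⟩
      obtain ⟨ind, hind⟩ : ∃ x : Ω → ℝ, x = Set.indicator {ω | y (t+1) ω = 1} (fun _ => (1:ℝ)) := ⟨_, rfl⟩
      obtain ⟨XB, hXB⟩ : ∃ x : Ω → ℝ, x = fun ω => X t ω * B ω := ⟨_, rfl⟩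
      have hGdecomp : ∀ ω, v (a (t+1) ω) (y (t+1) ω) = A ω + B ω * ind ω := by
        intro ω
        rcases hproc.y_range (t+1) h1t ω with h0 | h1
        · have hni' : ind ω = 0 := by rw [hind]; exact Set.indicator_of_notMem (by simp [h0]) _
          rw [h0, hni']; simp only [hA]; ring
        · have hm : ind ω = 1 := by rw [hind]; exact Set.indicator_of_mem (by simp [h1]) _
          rw [h1, hm]; simp only [hA, hB]; ring
      have haMeas : Measurable[ℱ t] (a (t+1)) := hproc.meas_a (t+1) h1t
      have hAmeas : Measurable[ℱ t] A := by
        rw [hA]; exact (measurable_of_countable (fun k : Fin 2 => v k 0)).comp haMeas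
      have hBmeas : Measurable[ℱ t] B := by
        rw [hB]; exact (measurable_of_countable (fun k : Fin 2 => v k 1 - v k 0)).comp haMeas
      have hqmeas : Measurable[ℱ t] (fun ω => q i (a (t+1) ω)) :=
        (measurable_of_countable (fun k : Fin 2 => q i k)).comp haMeas
      have hXBmeas : Measurable[ℱ t] XB := by rw [hXB]; exact (hXmeas t).mul hBmeas
      have hAbd : ∀ ω, |A ω| ≤ C := fun ω => by
        simp only [hA]; rw [abs_of_pos (hvpos _ _)]; exact (hvC _).1
      have hBbd : ∀ ω, |B ω| ≤ C := fun ω => by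
        simp only [hB]; rw [abs_sub_le_iff]
        constructor <;> [skip; skip] <;>
          · have := (hvC (a (t+1) ω)).1; have := (hvC (a (t+1) ω)).2
            have := hvpos (a (t+1) ω) 0; have := hvpos (a (t+1) ω) 1; linarith
      have hindbd : ∀ ω, |ind ω| ≤ 1 := fun ω => by
        rw [hind]; by_cases h : ω ∈ {ω | y (t+1) ω = 1}
        · rw [Set.indicator_of_mem h]; simp
        · rw [Set.indicator_of_notMem h]; simp
      have hXBbd : ∀ ω, |XB ω| ≤ M t * C := fun ω => by
        rw [hXB]; simp only []
        rw [abs_mul, abs_of_pos (hXpos t ω)]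
        exact mul_le_mul (hXle t ω) (hBbd ω) (abs_nonneg _) (hMpos t).le
      have hindmeas : Measurable ind := by
        rw [hind]
        refine Measurable.indicator measurable_const ?_
        exact (ℱ.le (t+1)) _ ((hproc.meas_y (t+1) h1t) (measurableSet_singleton 1))
      have hindint : Integrable ind μ := bdd_int _ 1 hindmeas hindbd
      have hXBint : Integrable XB μ :=
        bdd_int _ (M t * C) (hXBmeas.mono (ℱ.le t) le_rfl) hXBbd
      have hXBindint : Integrable (XB * ind) μ := by
        refine bdd_int _ (M t * C * 1) ((hXBmeas.mono (ℱ.le t) le_rfl).mul hindmeas) ?_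
        intro ω
        rw [Pi.mul_apply, abs_mul]
        exact mul_le_mul (hXBbd ω) (hindbd ω) (abs_nonneg _)
          (mul_nonneg (hMpos t).le hCpos.le)
      have hXAint : Integrable (fun ω => X t ω * A ω) μ := by
        refine bdd_int _ (M t * C) ((hXmeas' t).mul (hAmeas.mono (ℱ.le t) le_rfl)) ?_
        intro ω
        rw [abs_mul, abs_of_pos (hXpos t ω)]
        exact mul_le_mul (hXle t ω) (hAbd ω) (abs_nonneg _) (hMpos t).le
      have hXBqint : Integrable (fun ω => XB ω * q i (a (t+1) ω)) μ := by
        refine bdd_int _ (M t * C * 1)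
          ((hXBmeas.mono (ℱ.le t) le_rfl).mul (hqmeas.mono (ℱ.le t) le_rfl)) ?_
        intro ω
        rw [abs_mul]
        refine mul_le_mul (hXBbd ω) ?_ (abs_nonneg _) (mul_nonneg (hMpos t).le hCpos.le)
        rw [abs_of_pos (hq i _).1]; exact (hq i _).2.le
      -- the conditional expectation step
      have hsale : μ[ind | ℱ t] =ᵐ[μ] fun ω => q i (a (t+1) ω) := by
        have h := hproc.sale_prob (t+1) h1t
        rw [hind]
        simpa using h
      have hpull : μ[XB * ind | ℱ t] =ᵐ[μ] XB * μ[ind | ℱ t] :=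
        condExp_mul_of_stronglyMeasurable_left hXBmeas.stronglyMeasurable hXBindint hindint
      have hstep : ∫ ω, XB ω * ind ω ∂μ = ∫ ω, XB ω * q i (a (t+1) ω) ∂μ := by
        calc ∫ ω, XB ω * ind ω ∂μ = ∫ ω, (XB * ind) ω ∂μ := rfl
          _ = ∫ ω, (μ[XB * ind | ℱ t]) ω ∂μ := (integral_condExp (ℱ.le t)).symm
          _ = ∫ ω, (XB * μ[ind | ℱ t]) ω ∂μ := integral_congr_ae hpull
          _ = ∫ ω, XB ω * q i (a (t+1) ω) ∂μ := by
              refine integral_congr_ae ?_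
              filter_upwards [hsale] with ω hω
              simp only [Pi.mul_apply]; rw [hω]
      have hdecomp : ∫ ω, X (t+1) ω ∂μ
          = ∫ ω, X t ω * A ω ∂μ + ∫ ω, XB ω * ind ω ∂μ := by
        rw [show (fun ω => X (t+1) ω) = fun ω => X t ω * A ω + XB ω * ind ω by
          funext ω; rw [hXsucc t]; simp only [hXB]; rw [hGdecomp ω]; ring]
        exact integral_add hXAint hXBindint
      have hcomb : ∫ ω, X t ω * A ω ∂μ + ∫ ω, XB ω * q i (a (t+1) ω) ∂μ
          = ∫ ω, X t ω * ρk (a (t+1) ω) ∂μ := by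
        rw [← integral_add hXAint hXBqint]
        refine integral_congr_ae (ae_of_all _ fun ω => ?_)
        show X t ω * A ω + XB ω * q i (a (t+1) ω) = X t ω * ρk (a (t+1) ω)
        rw [← hkey (a (t+1) ω)]
        simp only [hXB, hA, hB]; ring
      have hfinal : ∫ ω, X t ω * ρk (a (t+1) ω) ∂μ ≤ ρ * ∫ ω, X t ω ∂μ := by
        rw [← integral_const_mul]
        refine integral_mono ?_ ((hXint t).const_mul ρ) ?_
        · refine bdd_int _ (M t * ρ) ((hXmeas' t).mul
            ((measurable_of_countable (fun k : Fin 2 => ρk k)).comp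
              ((hproc.meas_a (t+1) h1t).mono (ℱ.le t) le_rfl))) ?_
          intro ω
          rw [abs_mul, abs_of_pos (hXpos t ω)]
          refine mul_le_mul (hXle t ω) ?_ (abs_nonneg _) (hMpos t).le
          rw [abs_of_nonneg]
          · exact hρk_le _
          · rw [hρk]; positivity
        · intro ω
          show X t ω * ρk (a (t+1) ω) ≤ ρ * X t ω
          rw [mul_comm ρ]
          exact mul_le_mul_of_nonneg_left (hρk_le _) (hXpos t ω).le
      calc ∫ ω, X (t+1) ω ∂μ = ∫ ω, X t ω * A ω ∂μ + ∫ ω, XB ω * ind ω ∂μ := hdecomp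
        _ = ∫ ω, X t ω * A ω ∂μ + ∫ ω, XB ω * q i (a (t+1) ω) ∂μ := by rw [hstep]
        _ = ∫ ω, X t ω * ρk (a (t+1) ω) ∂μ := hcomb
        _ ≤ ρ * ∫ ω, X t ω ∂μ := hfinal
        _ ≤ ρ * ρ ^ t := by
            refine mul_le_mul_of_nonneg_left ih hρ0.le
        _ = ρ ^ (t+1) := by ring
  -- Markov + Borel–Cantelli
  obtain ⟨r, hr⟩ : ∃ x : ℝ, x = (ρ + 1) / 2 := ⟨_, rfl⟩
  have hr0 : 0 < r := by rw [hr]; linarith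
  have hρr : ρ < r := by rw [hr]; linarith
  have hr1 : r < 1 := by rw [hr]; linarith
  have hmark : ∀ t, μ {ω | r ^ t ≤ X t ω} ≤ ENNReal.ofReal ((ρ/r)^t) := by
    intro t
    have h1 : r^t * (μ {ω | r^t ≤ X t ω}).toReal ≤ ∫ ω, X t ω ∂μ :=
      mul_meas_ge_le_integral_of_nonneg (ae_of_all _ fun ω => (hXpos t ω).le) (hXint t) _
    have h2 : (μ {ω | r^t ≤ X t ω}).toReal ≤ (ρ/r)^t := by
      rw [div_pow, le_div_iff₀ (pow_pos hr0 t)]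
      calc (μ {ω | r^t ≤ X t ω}).toReal * r^t
          = r^t * (μ {ω | r^t ≤ X t ω}).toReal := by ring
        _ ≤ ∫ ω, X t ω ∂μ := h1
        _ ≤ ρ^t := hE t
    exact (ENNReal.le_ofReal_iff_toReal_le (measure_ne_top μ _)
      (pow_nonneg (div_nonneg hρ0.le hr0.le) t)).mpr h2
  have hsum : ∑' t, μ {ω | r ^ t ≤ X t ω} ≠ ⊤ := by
    refine ne_top_of_le_ne_top ?_ (ENNReal.tsum_le_tsum hmark)
    rw [← ENNReal.ofReal_tsum_of_nonneg (fun t => pow_nonneg (div_nonneg hρ0.le hr0.le) t)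
      (summable_geometric_of_lt_one (div_nonneg hρ0.le hr0.le) (by
        rw [div_lt_one hr0]; exact hρr))]
    exact ENNReal.ofReal_ne_top
  have hBC : μ {ω | ∃ᶠ t in Filter.atTop, r ^ t ≤ X t ω} = 0 :=
    measure_setOf_frequently_eq_zero hsum
  have hae : ∀ᵐ ω ∂μ, ∀ᶠ t in Filter.atTop, X t ω < r ^ t := by
    have h := (measure_eq_zero_iff_ae_notMem.mp hBC)
    filter_upwards [h] with ω hω
    rw [Filter.not_frequently] at hω
    filter_upwards [hω] with t ht
    exact lt_of_not_ge ht
  filter_upwards [hae] with ω hω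
  obtain ⟨N, hN⟩ := Filter.eventually_atTop.mp hω
  obtain ⟨T, hT⟩ : ∃ x : ℕ, x = max N 1 := ⟨_, rfl⟩
  have hTstep : ∀ t, T ≤ t → a (t+1) ω = i := by
    intro t ht
    have ht1 : 1 ≤ t := by omega
    have hx : X t ω < r ^ t := hN t (by omega)
    have hlogr : Real.log r < 0 := Real.log_neg hr0 hr1
    have hlog : c * LLR q a y t ω < (t:ℝ) * Real.log r := by
      have hrx : r ^ t = Real.exp ((t:ℝ) * Real.log r) := by
        rw [← Real.exp_log hr0, ← Real.exp_nat_mul, Real.exp_log hr0]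
      simp only [hX] at hx
      exact Real.exp_lt_exp.mp (by rw [← hrx]; exact hx)
    have htpos : (0:ℝ) < (t:ℝ) := by exact_mod_cast ht1
    have htlog : (t:ℝ) * Real.log r < 0 := mul_neg_of_pos_of_neg htpos hlogr
    rcases hi2 with h0 | h1
    · have hcv : c = 2⁻¹ := by rw [hc, if_pos h0]
      rw [hcv] at hlog
      have hL : LLR q a y t ω < 0 := by nlinarith
      rw [hpol t ht1 ω, if_neg (by linarith), h0]
    · have hcv : c = -2⁻¹ := by rw [hc, if_neg (by rw [h1]; decide)]
      rw [hcv] at hlog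
      have hL : 0 ≤ LLR q a y t ω := by nlinarith
      rw [hpol t ht1 ω, if_pos hL, h1]
  have hTall : ∀ t, T + 1 ≤ t → a t ω = i := by
    intro t ht
    have h1 : t - 1 + 1 = t := by omega
    have := hTstep (t-1) (by omega)
    rwa [h1] at this
  constructor
  · refine Set.Finite.subset (Set.finite_Icc 1 (T+1)) ?_
    rintro t ⟨ht1, hti⟩
    rw [Set.mem_Icc]
    refine ⟨ht1, ?_⟩
    by_contra h
    exact hti (hTall t (by omega))
  · exact ⟨T+1, hTall⟩
end
end
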